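/- arXiv:math/0508213 — 3 statements merged into one kernel-verified Lean document; each statement's English description precedes it below -/
import Mathlib

section
/- Let I be an open interval containing 0, let X = (X₁,…,Xₙ) and Y = (Y₁,…,Yₙ) be vectors of independent I-valued random variables with finite second moments such that E[Xᵢ] = E[Yᵢ] and E[Xᵢ²] = E[Yᵢ²] for each i, and such that X and Y are independent of each other. Let f : Iⁿ → ℝ be thrice differentiable in each coordinate, set U = f(X) and V = f(Y). Then for every thrice differentiable g : ℝ → ℝ with bounded first three derivatives and every K > 0, |E g(U) − E g(V)| ≤ C₁(g) λ₂(f) Σᵢ₌₁ⁿ [E(Xᵢ²; |Xᵢ| > K) + E(Yᵢ²; |Yᵢ| > K)] + C₂(g) λ₃(f) Σᵢ₌₁ⁿ [E(|Xᵢ|³; |Xᵢ| ≤ K) + E(|Yᵢ|³; |Yᵢ| ≤ K)]. -/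
open MeasureTheory ProbabilityTheory

/-- The `p`-fold partial derivative of `f` in the `i`-th coordinate, at `x`. -/
noncomputable def pderiv (n : ℕ) (f : (Fin n → ℝ) → ℝ) (i : Fin n) (p : ℕ)
    (x : Fin n → ℝ) : ℝ :=
  iteratedDeriv p (fun t => f (Function.update x i t)) (x i)

/-- `f` is thrice differentiable in each coordinate on `Iⁿ`. -/
def CoordDiff3 (n : ℕ) (I : Set ℝ) (f : (Fin n → ℝ) → ℝ) : Prop :=
  ∀ (i : Fin n) (x : Fin n → ℝ), (∀ j, x j ∈ I) →
    ∀ p < 3, DifferentiableOn ℝ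
      (iteratedDeriv p fun t => f (Function.update x i t)) I

/-- The set whose supremum is `λ_r(f)`. -/
def lamSet (n : ℕ) (I : Set ℝ) (f : (Fin n → ℝ) → ℝ) (r : ℕ) : Set ℝ :=
  { y | ∃ (i : Fin n) (p : ℕ) (x : Fin n → ℝ),
      1 ≤ p ∧ p ≤ r ∧ (∀ j, x j ∈ I) ∧
      y = |pderiv n f i p x| ^ ((r : ℝ) / (p : ℝ)) }

/-- `λ_r(f) = sup { |∂ᵢᵖ f(x)|^{r/p} : 1 ≤ i ≤ n, 1 ≤ p ≤ r, x ∈ Iⁿ }`. -/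
noncomputable def lam (n : ℕ) (I : Set ℝ) (f : (Fin n → ℝ) → ℝ) (r : ℕ) : ℝ :=
  sSup (lamSet n I f r)

open Filter Topology

lemma taylor_est {I : Set ℝ} (hIconn : I.OrdConnected) (hI0 : (0:ℝ) ∈ I)
    {ψ ψ1 ψ2 ψ3 : ℝ → ℝ} {M2 M3 : ℝ}
    (h1 : ∀ c ∈ I, HasDerivAt ψ (ψ1 c) c)
    (h2 : ∀ c ∈ I, HasDerivAt ψ1 (ψ2 c) c)
    (h3 : ∀ c ∈ I, HasDerivAt ψ2 (ψ3 c) c)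
    (hM2 : ∀ c ∈ I, |ψ2 c| ≤ M2) (hM3 : ∀ c ∈ I, |ψ3 c| ≤ M3) :
    ∀ t ∈ I, |ψ t - ψ 0 - ψ1 0 * t - ψ2 0 * t^2/2| ≤ min (M2 * t^2) (M3 * |t|^3/6) := by
  intro t ht
  have hconv : Convex ℝ I := hIconn.convex
  have hM2' : (0:ℝ) ≤ M2 := le_trans (abs_nonneg _) (hM2 0 hI0)
  have hM3' : (0:ℝ) ≤ M3 := le_trans (abs_nonneg _) (hM3 0 hI0)
  -- abs integral helper
  have habs : ∀ c : ℝ, (∫ s in (0:ℝ)..c, |s|) = c * |c| / 2 := by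
    intro c
    rcases le_or_gt 0 c with h | h
    · have : Set.EqOn (fun s : ℝ => |s|) (fun s => s) (Set.uIcc 0 c) := by
        intro s hs
        rw [Set.uIcc_of_le h] at hs
        exact abs_of_nonneg hs.1
      rw [intervalIntegral.integral_congr this, integral_id, abs_of_nonneg h]
      ring
    · have : Set.EqOn (fun s : ℝ => |s|) (fun s => -s) (Set.uIcc 0 c) := by
        intro s hs
        rw [Set.uIcc_of_ge h.le] at hs
        exact abs_of_nonpos hs.2
      rw [intervalIntegral.integral_congr this, intervalIntegral.integral_neg, integral_id, abs_of_neg h]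
      ring
  have e1 : ∀ c ∈ I, |ψ1 c - ψ1 0| ≤ M2 * |c| := by
    intro c hc
    simpa using hconv.norm_image_sub_le_of_norm_hasDerivWithin_le
      (fun x hx => (h2 x hx).hasDerivWithinAt) (fun x hx => hM2 x hx) hI0 hc
  have e2 : ∀ c ∈ I, |ψ2 c - ψ2 0| ≤ M3 * |c| := by
    intro c hc
    simpa using hconv.norm_image_sub_le_of_norm_hasDerivWithin_le
      (fun x hx => (h3 x hx).hasDerivWithinAt) (fun x hx => hM3 x hx) hI0 hc
  have hsub : Set.uIcc 0 t ⊆ I := hIconn.uIcc_subset hI0 ht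
  have hIoc : Set.uIoc 0 t ⊆ I := fun s hs => hsub (Set.Ioc_subset_Icc_self hs)
  -- continuity of ψ1 on uIcc
  have hcont1 : ContinuousOn ψ1 (Set.uIcc 0 t) :=
    fun s hs => ((h2 s (hsub hs)).continuousAt).continuousWithinAt
  have hcont2 : ContinuousOn ψ2 (Set.uIcc 0 t) :=
    fun s hs => ((h3 s (hsub hs)).continuousAt).continuousWithinAt
  -- FTC for ψ1
  have ftc1 : ∀ c ∈ I, ψ1 c - ψ1 0 - ψ2 0 * c = ∫ s in (0:ℝ)..c, (ψ2 s - ψ2 0) := by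
    intro c hc
    have hsub' : Set.uIcc 0 c ⊆ I := hIconn.uIcc_subset hI0 hc
    have hd : ∀ x ∈ Set.uIcc (0:ℝ) c,
        HasDerivAt (fun s => ψ1 s - ψ2 0 * s) (ψ2 x - ψ2 0) x := by
      intro x hx
      exact ((h2 x (hsub' hx)).sub ((hasDerivAt_id x).const_mul (ψ2 0))).congr_deriv (by simp)
    have hint : IntervalIntegrable (fun s => ψ2 s - ψ2 0) volume 0 c := by
      apply ContinuousOn.intervalIntegrable
      exact ContinuousOn.sub
        (fun s hs => ((h3 s (hsub' hs)).continuousAt).continuousWithinAt)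
        continuousOn_const
    have := intervalIntegral.integral_eq_sub_of_hasDerivAt hd hint
    rw [this]; ring
  -- second-order bound for ψ1 remainder
  have e1' : ∀ c ∈ I, |ψ1 c - ψ1 0 - ψ2 0 * c| ≤ M3 * c^2 / 2 := by
    intro c hc
    rw [ftc1 c hc]
    have hb : ∀ᵐ s ∂(volume.restrict (Set.uIoc 0 c)), ‖ψ2 s - ψ2 0‖ ≤ M3 * |s| := by
      refine (ae_restrict_iff' measurableSet_uIoc).2 (Filter.Eventually.of_forall ?_)
      intro s hs
      exact e2 s ((hIconn.uIcc_subset hI0 hc) (Set.Ioc_subset_Icc_self hs))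
    have := intervalIntegral.norm_integral_le_abs_of_norm_le hb
      ((continuous_const.mul continuous_abs).intervalIntegrable 0 c)
    rw [intervalIntegral.integral_const_mul, habs] at this
    calc |∫ s in (0:ℝ)..c, (ψ2 s - ψ2 0)| ≤ |M3 * (c * |c| / 2)| := this
      _ = M3 * c^2/2 := by
          rw [abs_mul, abs_of_nonneg hM3']
          have : |c * |c| / 2| = c^2/2 := by
            rw [abs_div, abs_mul, abs_abs, ← sq_abs]
            norm_num [sq]
          rw [this]; ring
  -- FTC for ψ
  have ftc0 : ψ t - ψ 0 - ψ1 0 * t - ψ2 0 * t^2/2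
      = ∫ s in (0:ℝ)..t, (ψ1 s - ψ1 0 - ψ2 0 * s) := by
    have hd : ∀ x ∈ Set.uIcc (0:ℝ) t,
        HasDerivAt (fun s => ψ s - ψ1 0 * s - ψ2 0/2 * s^2) (ψ1 x - ψ1 0 - ψ2 0 * x) x := by
      intro x hx
      have H := ((h1 x (hsub hx)).sub ((hasDerivAt_id x).const_mul (ψ1 0))).sub
        ((hasDerivAt_pow 2 x).const_mul (ψ2 0/2))
      exact H.congr_deriv (by push_cast; ring)
    have hint : IntervalIntegrable (fun s => ψ1 s - ψ1 0 - ψ2 0 * s) volume 0 t := by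
      apply ContinuousOn.intervalIntegrable
      exact (hcont1.sub continuousOn_const).sub (continuous_const.mul continuous_id).continuousOn
    have := intervalIntegral.integral_eq_sub_of_hasDerivAt hd hint
    rw [this]; ring
  rw [ftc0]
  refine le_min ?_ ?_
  · have hb : ∀ᵐ s ∂(volume.restrict (Set.uIoc 0 t)),
        ‖ψ1 s - ψ1 0 - ψ2 0 * s‖ ≤ (2*M2) * |s| := by
      refine (ae_restrict_iff' measurableSet_uIoc).2 (.of_forall ?_)
      intro s hs
      have hsI : s ∈ I := hIoc hs
      have h20 : |ψ2 0| ≤ M2 := hM2 0 hI0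
      calc ‖ψ1 s - ψ1 0 - ψ2 0 * s‖ ≤ |ψ1 s - ψ1 0| + |ψ2 0 * s| := norm_sub_le _ _
        _ ≤ M2 * |s| + M2 * |s| := add_le_add (e1 s hsI)
            (by rw [abs_mul]; exact mul_le_mul_of_nonneg_right h20 (abs_nonneg _))
        _ = 2*M2*|s| := by ring
    have hI2 := intervalIntegral.norm_integral_le_abs_of_norm_le hb
      ((continuous_const.mul continuous_abs).intervalIntegrable 0 t)
    rw [intervalIntegral.integral_const_mul, habs] at hI2
    refine hI2.trans (le_of_eq ?_)
    rw [abs_mul, abs_of_nonneg (by linarith : (0:ℝ) ≤ 2*M2)]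
    have : |t * |t| / 2| = t^2/2 := by
      rw [abs_div, abs_mul, abs_abs, ← sq_abs]
      norm_num [sq]
    rw [this]; ring
  · have hb : ∀ᵐ s ∂(volume.restrict (Set.uIoc 0 t)),
        ‖ψ1 s - ψ1 0 - ψ2 0 * s‖ ≤ M3/2 * s^2 := by
      refine (ae_restrict_iff' measurableSet_uIoc).2 (.of_forall ?_)
      intro s hs
      have := e1' s (hIoc hs)
      calc ‖ψ1 s - ψ1 0 - ψ2 0 * s‖ ≤ M3 * s^2/2 := this
        _ = M3/2 * s^2 := by ring
    have hI3 := intervalIntegral.norm_integral_le_abs_of_norm_le hb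
      ((continuous_const.mul (continuous_pow 2)).intervalIntegrable 0 t)
    rw [intervalIntegral.integral_const_mul, integral_pow] at hI3
    refine hI3.trans (le_of_eq ?_)
    rw [abs_mul, abs_of_nonneg (by linarith : (0:ℝ) ≤ M3/2)]
    have : |(t ^ (2+1) - 0 ^ (2+1)) / (2+1 : ℝ)| = |t|^3/3 := by
      rw [abs_div, ← abs_pow]
      norm_num
    push_cast at this ⊢
    rw [this]; ring

section LamBounds

variable {n : ℕ} {I : Set ℝ} {f : (Fin n → ℝ) → ℝ} {r : ℕ} {i : Fin n} {x : Fin n → ℝ}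

lemma lam_ge (hbdd : BddAbove (lamSet n I f r)) {p : ℕ} (h1 : 1 ≤ p) (h2 : p ≤ r)
    (hx : ∀ j, x j ∈ I) :
    |pderiv n f i p x| ^ ((r : ℝ) / (p : ℝ)) ≤ lam n I f r :=
  le_csSup hbdd ⟨i, p, x, h1, h2, hx, rfl⟩

lemma lam_nonneg (hbdd : BddAbove (lamSet n I f r)) (h1 : 1 ≤ r) (i : Fin n)
    (hI0 : (0:ℝ) ∈ I) : 0 ≤ lam n I f r :=
  le_trans (Real.rpow_nonneg (abs_nonneg _) _)
    (lam_ge (i := i) (x := fun _ => 0) hbdd le_rfl h1 (fun _ => hI0))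

lemma sq_pd1_le (hbdd : BddAbove (lamSet n I f 2)) (hx : ∀ j, x j ∈ I) :
    (pderiv n f i 1 x)^2 ≤ lam n I f 2 := by
  have := lam_ge (i := i) (x := x) hbdd le_rfl one_le_two hx
  have h2 : ((2:ℕ) : ℝ) / ((1:ℕ) : ℝ) = ((2:ℕ) : ℝ) := by norm_num
  rwa [h2, Real.rpow_natCast, sq_abs] at this

lemma abs_pd1_le_sqrt (hbdd : BddAbove (lamSet n I f 2)) (hx : ∀ j, x j ∈ I) :
    |pderiv n f i 1 x| ≤ Real.sqrt (lam n I f 2) := by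
  have := sq_pd1_le (i := i) hbdd hx
  calc |pderiv n f i 1 x| = Real.sqrt ((pderiv n f i 1 x)^2) := (Real.sqrt_sq_eq_abs _).symm
    _ ≤ Real.sqrt (lam n I f 2) := Real.sqrt_le_sqrt this

lemma abs_pd2_le (hbdd : BddAbove (lamSet n I f 2)) (hx : ∀ j, x j ∈ I) :
    |pderiv n f i 2 x| ≤ lam n I f 2 := by
  have := lam_ge (i := i) (x := x) hbdd one_le_two le_rfl hx
  have h2 : ((2:ℕ) : ℝ) / ((2:ℕ) : ℝ) = 1 := by norm_num
  rwa [h2, Real.rpow_one] at this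

lemma abs_pd1_cube_le (hbdd : BddAbove (lamSet n I f 3)) (hx : ∀ j, x j ∈ I) :
    |pderiv n f i 1 x|^3 ≤ lam n I f 3 := by
  have := lam_ge (i := i) (x := x) hbdd le_rfl (by norm_num) hx
  have h2 : ((3:ℕ) : ℝ) / ((1:ℕ) : ℝ) = ((3:ℕ) : ℝ) := by norm_num
  rwa [h2, Real.rpow_natCast] at this

lemma abs_pd3_le (hbdd : BddAbove (lamSet n I f 3)) (hx : ∀ j, x j ∈ I) :
    |pderiv n f i 3 x| ≤ lam n I f 3 := by
  have := lam_ge (i := i) (x := x) hbdd (by norm_num) le_rfl hx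
  have h2 : ((3:ℕ) : ℝ) / ((3:ℕ) : ℝ) = 1 := by norm_num
  rwa [h2, Real.rpow_one] at this

lemma abs_pd1_mul_pd2_le (hbdd : BddAbove (lamSet n I f 3)) (hI0 : (0:ℝ) ∈ I)
    (hx : ∀ j, x j ∈ I) :
    |pderiv n f i 1 x| * |pderiv n f i 2 x| ≤ lam n I f 3 := by
  set a := |pderiv n f i 1 x| with ha
  set b := |pderiv n f i 2 x| with hb
  have ha0 : 0 ≤ a := abs_nonneg _
  have hb0 : 0 ≤ b := abs_nonneg _
  have hL : 0 ≤ lam n I f 3 := lam_nonneg hbdd (by norm_num) i hI0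
  have h1 : a^3 ≤ lam n I f 3 := abs_pd1_cube_le hbdd hx
  have h2 : b ^ ((3:ℝ)/2) ≤ lam n I f 3 := by
    have := lam_ge (i := i) (x := x) hbdd one_le_two (by norm_num) hx
    have he : ((3:ℕ) : ℝ) / ((2:ℕ) : ℝ) = (3:ℝ)/2 := by norm_num
    rwa [he] at this
  have h2' : b^3 ≤ (lam n I f 3)^2 := by
    have h := mul_le_mul h2 h2 (Real.rpow_nonneg hb0 _) hL
    have hbb : b ^ ((3:ℝ)/2) * b ^ ((3:ℝ)/2) = b ^ (3:ℕ) := by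
      rw [← Real.rpow_add' hb0 (by norm_num), ← Real.rpow_natCast b 3]
      norm_num
    rw [hbb] at h
    rw [sq]
    exact h
  have hfin : (a*b)^3 ≤ (lam n I f 3)^3 := by
    calc (a*b)^3 = a^3 * b^3 := by ring
      _ ≤ lam n I f 3 * (lam n I f 3)^2 :=
          mul_le_mul h1 h2' (pow_nonneg hb0 3) hL
      _ = (lam n I f 3)^3 := by ring
  exact (pow_le_pow_iff_left₀ (mul_nonneg ha0 hb0) hL (by norm_num)).1 hfin

end LamBounds

section Psi

variable {n : ℕ} {I : Set ℝ} {f : (Fin n → ℝ) → ℝ} {g : ℝ → ℝ} {i : Fin n} {x : Fin n → ℝ}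
  {B1 B2 B3 : ℝ}

lemma pderiv_update (f : (Fin n → ℝ) → ℝ) (i : Fin n) (p : ℕ) (x : Fin n → ℝ) (t : ℝ) :
    pderiv n f i p (Function.update x i t)
      = iteratedDeriv p (fun s => f (Function.update x i s)) t := by
  simp [pderiv, Function.update_idem]

/-- `ψ` for base point `x` in coordinate `i`. -/
noncomputable def psi (n : ℕ) (f : (Fin n → ℝ) → ℝ) (g : ℝ → ℝ) (i : Fin n)
    (x : Fin n → ℝ) : ℝ → ℝ := fun t => g (f (Function.update x i t))

noncomputable def psiD1 (n : ℕ) (f : (Fin n → ℝ) → ℝ) (g : ℝ → ℝ) (i : Fin n)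
    (x : Fin n → ℝ) : ℝ → ℝ := fun c =>
  deriv g (f (Function.update x i c)) * pderiv n f i 1 (Function.update x i c)

noncomputable def psiD2 (n : ℕ) (f : (Fin n → ℝ) → ℝ) (g : ℝ → ℝ) (i : Fin n)
    (x : Fin n → ℝ) : ℝ → ℝ := fun c =>
  iteratedDeriv 2 g (f (Function.update x i c)) * (pderiv n f i 1 (Function.update x i c))^2
    + deriv g (f (Function.update x i c)) * pderiv n f i 2 (Function.update x i c)

lemma update_mem_box (hx : ∀ j, x j ∈ I) {c : ℝ} (hc : c ∈ I) :
    ∀ j, Function.update x i c j ∈ I := by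
  intro j
  rcases eq_or_ne j i with h | h
  · subst h; rw [Function.update_self]; exact hc
  · rw [Function.update_of_ne h]; exact hx j

lemma psi_facts (hIopen : IsOpen I) (hf : CoordDiff3 n I f)
    (hg : ∀ p < 3, Differentiable ℝ (iteratedDeriv p g)) (hx : ∀ j, x j ∈ I) :
    (∀ c ∈ I, HasDerivAt (psi n f g i x) (psiD1 n f g i x c) c) ∧
    (∀ c ∈ I, HasDerivAt (psiD1 n f g i x) (psiD2 n f g i x c) c) := by
  classical
  set F := fun t => f (Function.update x i t) with hFdef
  have hF0 : DifferentiableOn ℝ F I := by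
    have := hf i x hx 0 (by norm_num); simpa [iteratedDeriv_zero] using this
  have hF1 : DifferentiableOn ℝ (deriv F) I := by
    have := hf i x hx 1 (by norm_num); rwa [iteratedDeriv_one] at this
  have hFa : ∀ c ∈ I, HasDerivAt F (deriv F c) c := fun c hc =>
    (hF0.differentiableAt (hIopen.mem_nhds hc)).hasDerivAt
  have hFb : ∀ c ∈ I, HasDerivAt (deriv F) (deriv (deriv F) c) c := fun c hc =>
    (hF1.differentiableAt (hIopen.mem_nhds hc)).hasDerivAt
  have hgd : Differentiable ℝ g := by
    have := hg 0 (by norm_num); simpa [iteratedDeriv_zero] using this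
  have hg1 : Differentiable ℝ (deriv g) := by
    have := hg 1 (by norm_num); rwa [iteratedDeriv_one] at this
  have hd2g : deriv (deriv g) = iteratedDeriv 2 g := by
    rw [iteratedDeriv_succ, iteratedDeriv_one]
  have hpd1 : ∀ c : ℝ, pderiv n f i 1 (Function.update x i c) = deriv F c := by
    intro c; rw [pderiv_update, iteratedDeriv_one]
  have hpd2 : ∀ c : ℝ, pderiv n f i 2 (Function.update x i c) = deriv (deriv F) c := by
    intro c; rw [pderiv_update, iteratedDeriv_succ, iteratedDeriv_one]
  constructor
  · intro c hc
    have H := ((hgd (F c)).hasDerivAt).comp c (hFa c hc)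
    have : psiD1 n f g i x c = deriv g (F c) * deriv F c := by
      simp only [psiD1, hpd1]
      rfl
    rw [this]
    exact H
  · intro c hc
    have hps : psiD1 n f g i x = fun c => deriv g (F c) * deriv F c := by
      funext c; simp only [psiD1, hpd1]; rfl
    rw [hps]
    have H := (((hg1 (F c)).hasDerivAt).comp c (hFa c hc)).mul (hFb c hc)
    have hval : psiD2 n f g i x c
        = deriv (deriv g) (F c) * deriv F c * deriv F c
          + deriv g (F c) * deriv (deriv F) c := by
      simp only [psiD2, hpd1, hpd2, hd2g]
      ring
    rw [hval]
    exact H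

end Psi

section Psi2

variable {n : ℕ} {I : Set ℝ} {f : (Fin n → ℝ) → ℝ} {g : ℝ → ℝ} {i : Fin n} {x : Fin n → ℝ}
  {B1 B2 B3 : ℝ}

lemma B_nonneg (hB1 : ∀ t, |deriv g t| ≤ B1) : 0 ≤ B1 :=
  le_trans (abs_nonneg _) (hB1 0)

lemma psiD1_bound (hB1 : ∀ t, |deriv g t| ≤ B1) (hbdd2 : BddAbove (lamSet n I f 2))
    (hx : ∀ j, x j ∈ I) {c : ℝ} (hc : c ∈ I) :
    |psiD1 n f g i x c| ≤ B1 * Real.sqrt (lam n I f 2) := by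
  rw [psiD1, abs_mul]
  exact mul_le_mul (hB1 _) (abs_pd1_le_sqrt hbdd2 (update_mem_box hx hc))
    (abs_nonneg _) (B_nonneg hB1)

lemma psiD2_bound (hB1 : ∀ t, |deriv g t| ≤ B1) (hB2 : ∀ t, |iteratedDeriv 2 g t| ≤ B2)
    (hbdd2 : BddAbove (lamSet n I f 2)) (hx : ∀ j, x j ∈ I) {c : ℝ} (hc : c ∈ I) :
    |psiD2 n f g i x c| ≤ (B1 + B2) * lam n I f 2 := by
  have hxc := update_mem_box (i := i) hx hc
  have hBB2 : 0 ≤ B2 := le_trans (abs_nonneg _) (hB2 0)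
  have h1 : |iteratedDeriv 2 g (f (Function.update x i c))
      * (pderiv n f i 1 (Function.update x i c))^2| ≤ B2 * lam n I f 2 := by
    rw [abs_mul]
    refine mul_le_mul (hB2 _) ?_ (abs_nonneg _) hBB2
    rw [abs_pow, sq_abs]
    exact sq_pd1_le hbdd2 hxc
  have h2 : |deriv g (f (Function.update x i c))
      * pderiv n f i 2 (Function.update x i c)| ≤ B1 * lam n I f 2 := by
    rw [abs_mul]
    exact mul_le_mul (hB1 _) (abs_pd2_le hbdd2 hxc) (abs_nonneg _) (B_nonneg hB1)
  calc |psiD2 n f g i x c| ≤ _ + _ := abs_add_le _ _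
    _ ≤ B2 * lam n I f 2 + B1 * lam n I f 2 := add_le_add h1 h2
    _ = (B1 + B2) * lam n I f 2 := by ring

lemma psi_taylor (hIopen : IsOpen I) (hIconn : I.OrdConnected) (hI0 : (0:ℝ) ∈ I)
    (hf : CoordDiff3 n I f) (hg : ∀ p < 3, Differentiable ℝ (iteratedDeriv p g))
    (hB1 : ∀ t, |deriv g t| ≤ B1) (hB2 : ∀ t, |iteratedDeriv 2 g t| ≤ B2)
    (hB3 : ∀ t, |iteratedDeriv 3 g t| ≤ B3)
    (hbdd2 : BddAbove (lamSet n I f 2)) (hbdd3 : BddAbove (lamSet n I f 3))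
    (hx : ∀ j, x j ∈ I) :
    ∀ t ∈ I, |psi n f g i x t - psi n f g i x 0 - psiD1 n f g i x 0 * t
        - psiD2 n f g i x 0 * t^2/2|
      ≤ min ((B1 + B2) * lam n I f 2 * t^2)
          ((B1 + 3*B2 + B3) * lam n I f 3 * |t|^3 / 6) := by
  classical
  obtain ⟨hps1, hps2⟩ := psi_facts (i := i) (x := x) hIopen hf hg hx
  set F := fun t => f (Function.update x i t) with hFdef
  have hF1 : DifferentiableOn ℝ (deriv F) I := by
    have := hf i x hx 1 (by norm_num); rwa [iteratedDeriv_one] at this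
  have hF2 : DifferentiableOn ℝ (deriv (deriv F)) I := by
    have := hf i x hx 2 (by norm_num)
    rwa [show (2:ℕ) = 1+1 from rfl, iteratedDeriv_succ, iteratedDeriv_one] at this
  have hFa : ∀ c ∈ I, HasDerivAt F (deriv F c) c := fun c hc =>
    (((by have := hf i x hx 0 (by norm_num); simpa [iteratedDeriv_zero] using this :
        DifferentiableOn ℝ F I)).differentiableAt (hIopen.mem_nhds hc)).hasDerivAt
  have hFb : ∀ c ∈ I, HasDerivAt (deriv F) (deriv (deriv F) c) c := fun c hc =>
    (hF1.differentiableAt (hIopen.mem_nhds hc)).hasDerivAt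
  have hFc : ∀ c ∈ I, HasDerivAt (deriv (deriv F)) (deriv (deriv (deriv F)) c) c :=
    fun c hc => (hF2.differentiableAt (hIopen.mem_nhds hc)).hasDerivAt
  have hg1 : Differentiable ℝ (deriv g) := by
    have := hg 1 (by norm_num); rwa [iteratedDeriv_one] at this
  have hg2 : Differentiable ℝ (iteratedDeriv 2 g) := hg 2 (by norm_num)
  have hd2g : deriv (deriv g) = iteratedDeriv 2 g := by
    rw [iteratedDeriv_succ, iteratedDeriv_one]
  have hd3g : deriv (iteratedDeriv 2 g) = iteratedDeriv 3 g :=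
    (iteratedDeriv_succ (n := 2)).symm
  have hpd1 : ∀ c : ℝ, pderiv n f i 1 (Function.update x i c) = deriv F c := by
    intro c; rw [pderiv_update, iteratedDeriv_one]
  have hpd2 : ∀ c : ℝ, pderiv n f i 2 (Function.update x i c) = deriv (deriv F) c := by
    intro c; rw [pderiv_update, show (2:ℕ) = 1+1 from rfl, iteratedDeriv_succ,
      iteratedDeriv_one]
  have hpd3 : ∀ c : ℝ, pderiv n f i 3 (Function.update x i c)
      = deriv (deriv (deriv F)) c := by
    intro c
    rw [pderiv_update, show (3:ℕ) = 1+1+1 from rfl, iteratedDeriv_succ, iteratedDeriv_succ,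
      iteratedDeriv_one]
  -- third derivative of psi
  set ψ3 : ℝ → ℝ := fun c => iteratedDeriv 3 g (F c) * (deriv F c)^3
    + 3 * iteratedDeriv 2 g (F c) * (deriv F c * deriv (deriv F) c)
    + deriv g (F c) * deriv (deriv (deriv F)) c with hψ3def
  have hps2fun : psiD2 n f g i x = fun c => iteratedDeriv 2 g (F c) * (deriv F c)^2
      + deriv g (F c) * deriv (deriv F) c := by
    funext c; simp only [psiD2, hpd1, hpd2]; rfl
  have h3 : ∀ c ∈ I, HasDerivAt (psiD2 n f g i x) (ψ3 c) c := by
    intro c hc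
    rw [hps2fun]
    have t1 : HasDerivAt (fun c => iteratedDeriv 2 g (F c))
        (iteratedDeriv 3 g (F c) * deriv F c) c := by
      have := ((hg2 (F c)).hasDerivAt).comp c (hFa c hc)
      rwa [hd3g] at this
    have t2 : HasDerivAt (fun c => (deriv F c)^2)
        ((2:ℕ) * (deriv F c)^1 * deriv (deriv F) c) c := (hFb c hc).pow 2
    have t4 : HasDerivAt (fun c => deriv g (F c))
        (iteratedDeriv 2 g (F c) * deriv F c) c := by
      have := ((hg1 (F c)).hasDerivAt).comp c (hFa c hc)
      rwa [hd2g] at this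
    have H := (t1.mul t2).add (t4.mul (hFc c hc))
    exact H.congr_deriv (by simp only [hψ3def]; push_cast; ring)
  have hM2 : ∀ c ∈ I, |psiD2 n f g i x c| ≤ (B1 + B2) * lam n I f 2 :=
    fun c hc => psiD2_bound hB1 hB2 hbdd2 hx hc
  have hM3 : ∀ c ∈ I, |ψ3 c| ≤ (B1 + 3*B2 + B3) * lam n I f 3 := by
    intro c hc
    have hxc := update_mem_box (i := i) hx hc
    have hBB1 : 0 ≤ B1 := B_nonneg hB1
    have hBB2 : 0 ≤ B2 := le_trans (abs_nonneg _) (hB2 0)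
    have hBB3 : 0 ≤ B3 := le_trans (abs_nonneg _) (hB3 0)
    have e1 : |iteratedDeriv 3 g (F c) * (deriv F c)^3| ≤ B3 * lam n I f 3 := by
      rw [abs_mul, abs_pow]
      refine mul_le_mul (hB3 _) ?_ (pow_nonneg (abs_nonneg _) _) hBB3
      rw [← hpd1 c]
      exact abs_pd1_cube_le hbdd3 hxc
    have e2 : |3 * iteratedDeriv 2 g (F c) * (deriv F c * deriv (deriv F) c)|
        ≤ 3 * B2 * lam n I f 3 := by
      rw [abs_mul, abs_mul, abs_mul]
      have hL3 : 0 ≤ lam n I f 3 := lam_nonneg hbdd3 (by norm_num) i hI0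
      have := abs_pd1_mul_pd2_le (i := i) hbdd3 hI0 hxc
      rw [hpd1, hpd2] at this
      calc |(3:ℝ)| * |iteratedDeriv 2 g (F c)| * (|deriv F c| * |deriv (deriv F) c|)
          ≤ |(3:ℝ)| * B2 * lam n I f 3 := by
            refine mul_le_mul (mul_le_mul le_rfl (hB2 _) (abs_nonneg _) (abs_nonneg _))
              this (mul_nonneg (abs_nonneg _) (abs_nonneg _))
              (mul_nonneg (abs_nonneg _) hBB2)
        _ = 3 * B2 * lam n I f 3 := by norm_num
    have e3 : |deriv g (F c) * deriv (deriv (deriv F)) c| ≤ B1 * lam n I f 3 := by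
      rw [abs_mul, ← hpd3 c]
      exact mul_le_mul (hB1 _) (abs_pd3_le hbdd3 hxc) (abs_nonneg _) hBB1
    calc |ψ3 c| ≤ |iteratedDeriv 3 g (F c) * (deriv F c)^3
          + 3 * iteratedDeriv 2 g (F c) * (deriv F c * deriv (deriv F) c)|
          + |deriv g (F c) * deriv (deriv (deriv F)) c| := abs_add_le _ _
      _ ≤ (|iteratedDeriv 3 g (F c) * (deriv F c)^3|
          + |3 * iteratedDeriv 2 g (F c) * (deriv F c * deriv (deriv F) c)|)
          + |deriv g (F c) * deriv (deriv (deriv F)) c| :=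
            add_le_add (abs_add_le _ _) le_rfl
      _ ≤ (B3 * lam n I f 3 + 3 * B2 * lam n I f 3) + B1 * lam n I f 3 :=
            add_le_add (add_le_add e1 e2) e3
      _ = (B1 + 3*B2 + B3) * lam n I f 3 := by ring
  exact taylor_est hIconn hI0 hps1 hps2 h3 hM2 hM3

end Psi2

section Lip

variable {n : ℕ} {I : Set ℝ} {f : (Fin n → ℝ) → ℝ}

lemma f_coordLip (hIopen : IsOpen I) (hIconn : I.OrdConnected) (hf : CoordDiff3 n I f)
    (hbdd2 : BddAbove (lamSet n I f 2)) {i : Fin n} {x : Fin n → ℝ} (hx : ∀ j, x j ∈ I)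
    {s t : ℝ} (hs : s ∈ I) (ht : t ∈ I) :
    |f (Function.update x i s) - f (Function.update x i t)|
      ≤ Real.sqrt (lam n I f 2) * |s - t| := by
  set F := fun t => f (Function.update x i t) with hFdef
  have hF0 : DifferentiableOn ℝ F I := by
    have := hf i x hx 0 (by norm_num); simpa [iteratedDeriv_zero] using this
  have hFa : ∀ c ∈ I, HasDerivWithinAt F (deriv F c) I c := fun c hc =>
    ((hF0.differentiableAt (hIopen.mem_nhds hc)).hasDerivAt).hasDerivWithinAt
  have hbound : ∀ c ∈ I, ‖deriv F c‖ ≤ Real.sqrt (lam n I f 2) := by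
    intro c hc
    have := abs_pd1_le_sqrt (i := i) hbdd2 (update_mem_box (i := i) hx hc)
    rwa [pderiv_update, iteratedDeriv_one] at this
  simpa using hIconn.convex.norm_image_sub_le_of_norm_hasDerivWithin_le hFa hbound ht hs

lemma f_lip (hIopen : IsOpen I) (hIconn : I.OrdConnected) (hf : CoordDiff3 n I f)
    (hbdd2 : BddAbove (lamSet n I f 2)) {x y : Fin n → ℝ}
    (hx : ∀ j, x j ∈ I) (hy : ∀ j, y j ∈ I) :
    |f x - f y| ≤ Real.sqrt (lam n I f 2) * ∑ j, |x j - y j| := by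
  classical
  have hL0 : 0 ≤ Real.sqrt (lam n I f 2) := Real.sqrt_nonneg _
  set z : ℕ → (Fin n → ℝ) := fun k j => if (j : ℕ) < k then y j else x j with hz
  have hzbox : ∀ k, ∀ j, z k j ∈ I := by
    intro k j; by_cases h : (j:ℕ) < k <;> simp [hz, h, hx j, hy j]
  have hz0 : z 0 = x := by funext j; simp [hz]
  have hzn : z n = y := by funext j; simp [hz, j.isLt]
  set G : ℕ → ℝ := fun k =>
    if h : k < n then Real.sqrt (lam n I f 2) * |x ⟨k, h⟩ - y ⟨k, h⟩| else 0 with hG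
  have hstep : ∀ k ∈ Finset.range n, |f (z k) - f (z (k+1))| ≤ G k := by
    intro k hkr
    have hk : k < n := Finset.mem_range.1 hkr
    set i : Fin n := ⟨k, hk⟩ with hi
    have h1 : z k = Function.update (z k) i (x i) := by
      funext j
      rcases eq_or_ne j i with h | h
      · subst h; simp [hz, Function.update_self, hi]
      · rw [Function.update_of_ne h]
    have h2 : z (k+1) = Function.update (z k) i (y i) := by
      funext j
      rcases eq_or_ne j i with h | h
      · subst h; simp [hz, Function.update_self, hi]
      · rw [Function.update_of_ne h]
        have hjk : (j:ℕ) ≠ k := fun hc => h (Fin.ext hc)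
        by_cases hle : (j:ℕ) < k + 1
        · have : (j:ℕ) < k := by omega
          simp [hz, hle, this]
        · have : ¬ (j:ℕ) < k := by omega
          simp [hz, hle, this]
    have hstep0 := f_coordLip (i := i) (x := z k) hIopen hIconn hf hbdd2 (hzbox k)
      (hx i) (hy i)
    rw [← h1, ← h2] at hstep0
    simp only [hG, dif_pos hk]
    exact hstep0
  have htel : f (z 0) - f (z n) = ∑ k ∈ Finset.range n, (f (z k) - f (z (k+1))) :=
    (Finset.sum_range_sub' (fun k => f (z k)) n).symm
  have : |f x - f y| ≤ ∑ k ∈ Finset.range n, G k := by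
    rw [← hz0, ← hzn, htel]
    exact (Finset.abs_sum_le_sum_abs _ _).trans (Finset.sum_le_sum hstep)
  refine this.trans (le_of_eq ?_)
  rw [Finset.mul_sum, ← Fin.sum_univ_eq_sum_range G n]
  refine Finset.sum_congr rfl (fun j _ => ?_)
  simp [hG, j.isLt]

lemma f_ext (hIopen : IsOpen I) (hIconn : I.OrdConnected) (hf : CoordDiff3 n I f)
    (hbdd2 : BddAbove (lamSet n I f 2)) :
    ∃ ft : (Fin n → ℝ) → ℝ, Continuous ft ∧ ∀ x, (∀ j, x j ∈ I) → f x = ft x := by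
  classical
  set K : NNReal := Real.toNNReal (Real.sqrt (lam n I f 2) * n) with hK
  have hlip : LipschitzOnWith K f {x | ∀ j, x j ∈ I} := by
    rw [lipschitzOnWith_iff_dist_le_mul]
    intro x hx y hy
    rw [Real.dist_eq]
    have h1 := f_lip hIopen hIconn hf hbdd2 hx hy
    have h2 : ∑ j, |x j - y j| ≤ (n : ℝ) * dist x y := by
      calc ∑ j, |x j - y j| ≤ ∑ _j : Fin n, dist x y :=
            Finset.sum_le_sum (fun j _ => by
              rw [← Real.dist_eq]; exact dist_le_pi_dist x y j)
        _ = (n : ℝ) * dist x y := by simp [mul_comm]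
    have hnn : (K : ℝ) = Real.sqrt (lam n I f 2) * n :=
      Real.coe_toNNReal _ (mul_nonneg (Real.sqrt_nonneg _) (Nat.cast_nonneg _))
    calc |f x - f y| ≤ Real.sqrt (lam n I f 2) * ∑ j, |x j - y j| := h1
      _ ≤ Real.sqrt (lam n I f 2) * ((n : ℝ) * dist x y) :=
          mul_le_mul_of_nonneg_left h2 (Real.sqrt_nonneg _)
      _ = (K : ℝ) * dist x y := by rw [hnn]; ring
  obtain ⟨ft, hft, heq⟩ := hlip.extend_real
  exact ⟨ft, hft.continuous, fun x hx => heq hx⟩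

end Lip

section FactorLimit

open Filter

variable {Ω : Type} [MeasurableSpace Ω] {μ : Measure Ω} [IsProbabilityMeasure μ]

lemma factor_limit {u : Ω → ℝ} {ζ : Ω → ℝ} (um : ℕ → Ω → ℝ)
    (hum : ∀ m, Measurable (um m)) (C : ℝ) (hb : ∀ m ω, |um m ω| ≤ C)
    (hlim : ∀ ω, Tendsto (fun m => um m ω) atTop (𝓝 (u ω)))
    (hζm : Measurable ζ) (hζi : Integrable ζ μ)
    (hfact : ∀ m, ∫ ω, um m ω * ζ ω ∂μ = (∫ ω, um m ω ∂μ) * ∫ ω, ζ ω ∂μ) :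
    ∫ ω, u ω * ζ ω ∂μ = (∫ ω, u ω ∂μ) * ∫ ω, ζ ω ∂μ := by
  have hu : Measurable u :=
    measurable_of_tendsto_metrizable hum (tendsto_pi_nhds.2 hlim)
  have hbu : ∀ ω, |u ω| ≤ C := fun ω =>
    le_of_tendsto' ((continuous_abs.tendsto _).comp (hlim ω)) (fun m => hb m ω)
  have T1 : Tendsto (fun m => ∫ ω, um m ω * ζ ω ∂μ) atTop (𝓝 (∫ ω, u ω * ζ ω ∂μ)) := by
    refine MeasureTheory.tendsto_integral_of_dominated_convergence
      (fun ω => C * |ζ ω|) (fun m => ((hum m).mul hζm).aestronglyMeasurable)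
      (hζi.abs.const_mul C) (fun m => Filter.Eventually.of_forall (fun ω => ?_))
      (Filter.Eventually.of_forall (fun ω => (hlim ω).mul tendsto_const_nhds))
    rw [Real.norm_eq_abs, abs_mul]
    exact mul_le_mul_of_nonneg_right (hb m ω) (abs_nonneg _)
  have T2 : Tendsto (fun m => ∫ ω, um m ω ∂μ) atTop (𝓝 (∫ ω, u ω ∂μ)) := by
    refine MeasureTheory.tendsto_integral_of_dominated_convergence
      (fun _ => C) (fun m => (hum m).aestronglyMeasurable)
      (integrable_const C) (fun m => Filter.Eventually.of_forall (fun ω => ?_))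
      (Filter.Eventually.of_forall hlim)
    rw [Real.norm_eq_abs]; exact hb m ω
  have T3 : Tendsto (fun m => ∫ ω, um m ω * ζ ω ∂μ) atTop
      (𝓝 ((∫ ω, u ω ∂μ) * ∫ ω, ζ ω ∂μ)) := by
    simp_rw [hfact]
    exact T2.mul tendsto_const_nhds
  exact tendsto_nhds_unique T1 T3

end FactorLimit

section Swap

open Filter

variable {Ω : Type} [MeasurableSpace Ω] {μ : Measure Ω} [IsProbabilityMeasure μ]

lemma swap_est {n : ℕ} {I : Set ℝ} (hIopen : IsOpen I) (hIconn : I.OrdConnected)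
    (hI0 : (0:ℝ) ∈ I)
    {f : (Fin n → ℝ) → ℝ} (hf : CoordDiff3 n I f)
    (hbdd2 : BddAbove (lamSet n I f 2)) (hbdd3 : BddAbove (lamSet n I f 3))
    {g : ℝ → ℝ} (hg : ∀ p < 3, Differentiable ℝ (iteratedDeriv p g))
    {B1 B2 B3 : ℝ} (hB1 : ∀ t, |deriv g t| ≤ B1) (hB2 : ∀ t, |iteratedDeriv 2 g t| ≤ B2)
    (hB3 : ∀ t, |iteratedDeriv 3 g t| ≤ B3)
    {ft : (Fin n → ℝ) → ℝ} (hftc : Continuous ft)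
    (hfteq : ∀ x : Fin n → ℝ, (∀ j, x j ∈ I) → f x = ft x)
    (K : ℝ)
    (i : Fin n) (W : Ω → Fin n → ℝ) (hWm : Measurable W) (hWI : ∀ ω j, W ω j ∈ I)
    (hWi0 : ∀ ω, W ω i = 0) (hWint : ∀ j, Integrable (fun ω => W ω j) μ)
    (ξ η : Ω → ℝ) (hξm : Measurable ξ) (hηm : Measurable η)
    (hξI : ∀ ω, ξ ω ∈ I) (hηI : ∀ ω, η ω ∈ I)
    (hξ2 : MemLp ξ 2 μ) (hη2 : MemLp η 2 μ)
    (hindξ : IndepFun W ξ μ) (hindη : IndepFun W η μ)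
    (hmeanE : ∫ ω, ξ ω ∂μ = ∫ ω, η ω ∂μ)
    (hvarE : ∫ ω, (ξ ω)^2 ∂μ = ∫ ω, (η ω)^2 ∂μ) :
    |(∫ ω, g (f (Function.update (W ω) i (ξ ω))) ∂μ)
        - ∫ ω, g (f (Function.update (W ω) i (η ω))) ∂μ|
      ≤ (B1+B2) * lam n I f 2 *
          ((∫ ω in {ω | K < |ξ ω|}, (ξ ω)^2 ∂μ) + ∫ ω in {ω | K < |η ω|}, (η ω)^2 ∂μ)
        + (B1 + 3*B2 + B3) * lam n I f 3 / 6 *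
          ((∫ ω in {ω | |ξ ω| ≤ K}, |ξ ω|^3 ∂μ) + ∫ ω in {ω | |η ω| ≤ K}, |η ω|^3 ∂μ) := by
  classical
  set L2 := lam n I f 2 with hL2def
  set L3 := lam n I f 3 with hL3def
  set C1 := B1 * Real.sqrt L2 with hC1def
  set M2 := (B1 + B2) * L2 with hM2def
  set M3 := (B1 + 3*B2 + B3) * L3 with hM3def
  have hgc : Continuous g := by
    have := hg 0 (by norm_num); rw [iteratedDeriv_zero] at this; exact this.continuous
  have hL2nn : 0 ≤ L2 := lam_nonneg hbdd2 one_le_two i hI0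
  have hL3nn : 0 ≤ L3 := lam_nonneg hbdd3 (by norm_num) i hI0
  have hB1nn : 0 ≤ B1 := B_nonneg hB1
  have hB2nn : 0 ≤ B2 := le_trans (abs_nonneg _) (hB2 0)
  have hB3nn : 0 ≤ B3 := le_trans (abs_nonneg _) (hB3 0)
  have hC1nn : 0 ≤ C1 := mul_nonneg hB1nn (Real.sqrt_nonneg _)
  have hM2nn : 0 ≤ M2 := mul_nonneg (by linarith) hL2nn
  have hM3nn : 0 ≤ M3 := mul_nonneg (by linarith) hL3nn
  -- abbreviations
  set a1 : Ω → ℝ := fun ω => psiD1 n f g i (W ω) 0 with ha1def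
  set a2 : Ω → ℝ := fun ω => psiD2 n f g i (W ω) 0 with ha2def
  have hpsiA : ∀ ω, ∀ c ∈ I, HasDerivAt (psi n f g i (W ω)) (psiD1 n f g i (W ω) c) c :=
    fun ω => (psi_facts hIopen hf hg (hWI ω)).1
  have hpsiB : ∀ ω, ∀ c ∈ I, HasDerivAt (psiD1 n f g i (W ω)) (psiD2 n f g i (W ω) c) c :=
    fun ω => (psi_facts hIopen hf hg (hWI ω)).2
  have ha1b : ∀ ω, |a1 ω| ≤ C1 := fun ω => psiD1_bound hB1 hbdd2 (hWI ω) hI0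
  have ha2b : ∀ ω, |a2 ω| ≤ M2 := fun ω => psiD2_bound hB1 hB2 hbdd2 (hWI ω) hI0
  have hD1b : ∀ ω, ∀ c ∈ I, |psiD1 n f g i (W ω) c| ≤ C1 :=
    fun ω c hc => psiD1_bound hB1 hbdd2 (hWI ω) hc
  have hD2b : ∀ ω, ∀ c ∈ I, |psiD2 n f g i (W ω) c| ≤ M2 :=
    fun ω c hc => psiD2_bound hB1 hB2 hbdd2 (hWI ω) hc
  -- Lipschitz bounds via MVT
  have hψlip : ∀ ω, ∀ c ∈ I, ∀ c' ∈ I,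
      |psi n f g i (W ω) c - psi n f g i (W ω) c'| ≤ C1 * |c - c'| := by
    intro ω c hc c' hc'
    simpa using hIconn.convex.norm_image_sub_le_of_norm_hasDerivWithin_le
      (fun u hu => (hpsiA ω u hu).hasDerivWithinAt) (fun u hu => hD1b ω u hu) hc' hc
  have hD1lip : ∀ ω, ∀ c ∈ I, ∀ c' ∈ I,
      |psiD1 n f g i (W ω) c - psiD1 n f g i (W ω) c'| ≤ M2 * |c - c'| := by
    intro ω c hc c' hc'
    simpa using hIconn.convex.norm_image_sub_le_of_norm_hasDerivWithin_le
      (fun u hu => (hpsiB ω u hu).hasDerivWithinAt) (fun u hu => hD2b ω u hu) hc' hc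
  -- update measurability
  have hupdm : ∀ {ζ : Ω → ℝ}, Measurable ζ →
      Measurable (fun ω => Function.update (W ω) i (ζ ω)) := by
    intro ζ hζ
    refine measurable_pi_lambda _ (fun j => ?_)
    rcases eq_or_ne j i with h | h
    · subst h; simpa [Function.update_self] using hζ
    · simpa [Function.update_of_ne h] using (hWm.eval (a := j))
  have hupd_box : ∀ {ζ : Ω → ℝ}, (∀ ω, ζ ω ∈ I) → ∀ ω,
      ∀ j, Function.update (W ω) i (ζ ω) j ∈ I :=
    fun hζI ω => update_mem_box (i := i) (fun j => hWI ω j) (hζI ω)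
  -- psi values via the extension
  have hpsieq : ∀ ω, ∀ c ∈ I,
      psi n f g i (W ω) c = g (ft (Function.update (W ω) i c)) := by
    intro ω c hc
    unfold psi
    rw [hfteq _ (update_mem_box (i := i) (fun j => hWI ω j) hc)]
  have hψ0 : ∀ ω, psi n f g i (W ω) 0 = g (f (W ω)) := by
    intro ω
    unfold psi
    rw [show Function.update (W ω) i 0 = W ω from by
      rw [← hWi0 ω]; exact Function.update_eq_self i (W ω)]
  -- the D1 package: measurability and factorization
  have hD1pack : ∀ c, c ∈ I → Measurable (fun ω => psiD1 n f g i (W ω) c) ∧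
      (∀ ζ' : Ω → ℝ, Measurable ζ' → Integrable ζ' μ → IndepFun W ζ' μ →
        ∫ ω, psiD1 n f g i (W ω) c * ζ' ω ∂μ
          = (∫ ω, psiD1 n f g i (W ω) c ∂μ) * ∫ ω, ζ' ω ∂μ) := by
    intro c hc
    obtain ⟨δ, hδ, hballc⟩ := Metric.isOpen_iff.1 hIopen c hc
    set t : ℕ → ℝ := fun m => δ/2 * (1/(m+1)) with htdef
    have htpos : ∀ m, 0 < t m := fun m => by positivity
    have htmem : ∀ m, c + t m ∈ I := by
      intro m
      apply hballc
      rw [Metric.mem_ball, Real.dist_eq, add_sub_cancel_left, abs_of_pos (htpos m)]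
      have h1 : (1:ℝ)/(m+1) ≤ 1 := by
        rw [div_le_one (by positivity)]; norm_num
      calc δ/2 * (1/(m+1)) ≤ δ/2 * 1 := by
            apply mul_le_mul_of_nonneg_left h1 (by positivity)
        _ < δ := by linarith
    have htto : Tendsto t atTop (𝓝 0) := by
      have h0 : Tendsto (fun m : ℕ => 1/((m:ℝ)+1)) atTop (𝓝 0) :=
        tendsto_one_div_add_atTop_nhds_zero_nat
      have := h0.const_mul (δ/2)
      rw [mul_zero] at this
      exact this
    have htto' : Tendsto (fun m => c + t m) atTop (𝓝[≠] c) := by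
      rw [tendsto_nhdsWithin_iff]
      constructor
      · have := htto.const_add c
        rw [add_zero] at this
        exact this
      · exact Filter.Eventually.of_forall (fun m => by
          simpa using ne_of_gt (lt_add_of_pos_right c (htpos m)))
    set um : ℕ → Ω → ℝ := fun m ω =>
      (g (ft (Function.update (W ω) i (c + t m))) - g (ft (Function.update (W ω) i c))) / t m
      with humdef
    have humeq : ∀ m ω, um m ω
        = (psi n f g i (W ω) (c + t m) - psi n f g i (W ω) c) / t m := by
      intro m ω
      rw [humdef]
      simp only
      rw [← hpsieq ω _ (htmem m), ← hpsieq ω c hc]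
    have hum : ∀ m, Measurable (um m) := by
      intro m
      apply Measurable.div_const
      exact ((hgc.comp hftc).measurable.comp (hupdm (measurable_const))).sub
        ((hgc.comp hftc).measurable.comp (hupdm (measurable_const)))
    have hb : ∀ m ω, |um m ω| ≤ C1 := by
      intro m ω
      rw [humeq m ω, abs_div]
      rw [div_le_iff₀ (by rw [abs_of_pos (htpos m)]; exact htpos m)]
      calc |psi n f g i (W ω) (c + t m) - psi n f g i (W ω) c|
          ≤ C1 * |c + t m - c| := hψlip ω _ (htmem m) c hc
        _ = C1 * |t m| := by rw [add_sub_cancel_left]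
    have hlim : ∀ ω, Tendsto (fun m => um m ω) atTop (𝓝 (psiD1 n f g i (W ω) c)) := by
      intro ω
      have hder := hpsiA ω c hc
      have hsl := hasDerivAt_iff_tendsto_slope.1 hder
      have := hsl.comp htto'
      refine this.congr (fun m => ?_)
      rw [humeq m ω]
      simp only [Function.comp_apply, slope_def_field]
      rw [add_sub_cancel_left]
    constructor
    · exact measurable_of_tendsto_metrizable hum (tendsto_pi_nhds.2 hlim)
    · intro ζ' hζ'm hζ'i hindζ'
      refine factor_limit um hum C1 hb hlim hζ'm hζ'i (fun m => ?_)
      set Φ : (Fin n → ℝ) → ℝ := fun x =>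
        (g (ft (Function.update x i (c + t m))) - g (ft (Function.update x i c))) / t m
        with hΦdef
      have hΦm : Measurable Φ := by
        apply Measurable.div_const
        refine Measurable.sub ?_ ?_ <;>
        · apply (hgc.comp hftc).measurable.comp
          refine measurable_pi_lambda _ (fun j => ?_)
          rcases eq_or_ne j i with h | h
          · subst h; simp [Function.update_self]
          · simpa [Function.update_of_ne h] using (measurable_pi_apply j)
      have hcomp := (hindζ'.comp hΦm measurable_id).integral_mul_eq_mul_integral
        ((hΦm.comp hWm).aestronglyMeasurable) (hζ'm.aestronglyMeasurable)
      simpa using hcomp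
  -- bounded integrability helper
  have hbint : ∀ (u : Ω → ℝ) (C : ℝ), Measurable u → (∀ ω, |u ω| ≤ C) → Integrable u μ :=
    fun u C hm hb => Integrable.mono' (integrable_const C) hm.aestronglyMeasurable
      (Filter.Eventually.of_forall fun ω => by rw [Real.norm_eq_abs]; exact hb ω)
  -- sequence at 0
  obtain ⟨ε, hεpos, hball⟩ := Metric.isOpen_iff.1 hIopen 0 hI0
  set tm : ℕ → ℝ := fun m => ε/2 * (1/(m+1)) with htmdef
  have htmpos : ∀ m, 0 < tm m := fun m => by positivity
  have htmmem : ∀ m, tm m ∈ I := by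
    intro m
    apply hball
    rw [Metric.mem_ball, Real.dist_eq, sub_zero, abs_of_pos (htmpos m)]
    have h1 : (1:ℝ)/(m+1) ≤ 1 := by rw [div_le_one (by positivity)]; norm_num
    calc ε/2 * (1/(m+1)) ≤ ε/2 * 1 := mul_le_mul_of_nonneg_left h1 (by positivity)
      _ < ε := by linarith
  have htmto : Tendsto tm atTop (𝓝 0) := by
    have h0 : Tendsto (fun m : ℕ => 1/((m:ℝ)+1)) atTop (𝓝 0) :=
      tendsto_one_div_add_atTop_nhds_zero_nat
    have := h0.const_mul (ε/2)
    rw [mul_zero] at this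
    exact this
  have htmto' : Tendsto tm atTop (𝓝[≠] 0) := by
    rw [tendsto_nhdsWithin_iff]
    exact ⟨htmto, Filter.Eventually.of_forall fun m => by
      simpa using ne_of_gt (htmpos m)⟩
  set q2 : ℕ → Ω → ℝ := fun m ω =>
    (psiD1 n f g i (W ω) (tm m) - psiD1 n f g i (W ω) 0) / tm m with hq2def
  have hq2m : ∀ m, Measurable (q2 m) := fun m =>
    (((hD1pack (tm m) (htmmem m)).1).sub ((hD1pack 0 hI0).1)).div_const _
  have hq2b : ∀ m ω, |q2 m ω| ≤ M2 := by
    intro m ω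
    rw [hq2def]
    simp only
    rw [abs_div, div_le_iff₀ (by rw [abs_of_pos (htmpos m)]; exact htmpos m)]
    calc |psiD1 n f g i (W ω) (tm m) - psiD1 n f g i (W ω) 0|
        ≤ M2 * |tm m - 0| := hD1lip ω _ (htmmem m) 0 hI0
      _ = M2 * |tm m| := by rw [sub_zero]
  have hq2lim : ∀ ω, Tendsto (fun m => q2 m ω) atTop (𝓝 (a2 ω)) := by
    intro ω
    have hsl := hasDerivAt_iff_tendsto_slope.1 (hpsiB ω 0 hI0)
    have hcomp := hsl.comp htmto'
    refine hcomp.congr fun m => ?_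
    simp only [Function.comp_apply, slope_def_field, hq2def]
    rw [sub_zero]
  have ha1m : Measurable a1 := (hD1pack 0 hI0).1
  have ha2m : Measurable a2 :=
    measurable_of_tendsto_metrizable hq2m (tendsto_pi_nhds.2 hq2lim)
  have ha1int : Integrable a1 μ := hbint a1 C1 ha1m ha1b
  have ha2int : Integrable a2 μ := hbint a2 M2 ha2m ha2b
  -- g is globally B1-Lipschitz
  have hgd : Differentiable ℝ g := by
    have := hg 0 (by norm_num); rwa [iteratedDeriv_zero] at this
  have hglip : ∀ u v : ℝ, |g u - g v| ≤ B1 * |u - v| := by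
    intro u v
    simpa using (convex_univ : Convex ℝ (Set.univ : Set ℝ)).norm_image_sub_le_of_norm_hasDerivWithin_le
      (f' := deriv g) (fun y _ => ((hgd y).hasDerivAt).hasDerivWithinAt)
      (fun y _ => hB1 y) (Set.mem_univ v) (Set.mem_univ u)
  -- integrability of g ∘ f ∘ W
  set x0 : Fin n → ℝ := fun _ => 0 with hx0def
  have hx0box : ∀ j, x0 j ∈ I := fun _ => hI0
  have hgfWm : Measurable (fun ω => g (f (W ω))) := by
    have he : (fun ω => g (f (W ω))) = fun ω => g (ft (W ω)) := by
      funext ω; rw [hfteq _ (fun j => hWI ω j)]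
    rw [he]
    exact (hgc.comp hftc).measurable.comp hWm
  have hgfWint : Integrable (fun ω => g (f (W ω))) μ := by
    refine Integrable.mono'
      (g := fun ω => |g (f x0)| + B1 * Real.sqrt L2 * ∑ j, |W ω j|) ?_
      hgfWm.aestronglyMeasurable (Filter.Eventually.of_forall fun ω => ?_)
    · exact (integrable_const _).add
        ((integrable_finset_sum _ (fun j _ => (hWint j).abs)).const_mul _)
    · rw [Real.norm_eq_abs]
      have h1 : |g (f (W ω)) - g (f x0)| ≤ B1 * |f (W ω) - f x0| := hglip _ _
      have h2 : |f (W ω) - f x0| ≤ Real.sqrt L2 * ∑ j, |W ω j - x0 j| :=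
        f_lip hIopen hIconn hf hbdd2 (fun j => hWI ω j) hx0box
      have h4 : ∑ j, |W ω j - x0 j| = ∑ j, |W ω j| := by
        refine Finset.sum_congr rfl (fun j _ => ?_)
        simp [hx0def]
      rw [h4] at h2
      have h5 : |g (f (W ω))| ≤ |g (f x0)| + |g (f (W ω)) - g (f x0)| := by
        have := abs_add_le (g (f x0)) (g (f (W ω)) - g (f x0))
        simpa using this
      have h6 : B1 * |f (W ω) - f x0| ≤ B1 * (Real.sqrt L2 * ∑ j, |W ω j|) :=
        mul_le_mul_of_nonneg_left h2 hB1nn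
      rw [← mul_assoc] at h6
      linarith
  -- main single-variable estimate
  have hside : ∀ ζ : Ω → ℝ, Measurable ζ → (∀ ω, ζ ω ∈ I) → MemLp ζ 2 μ →
      IndepFun W ζ μ →
      |(∫ ω, g (f (Function.update (W ω) i (ζ ω))) ∂μ)
        - ((∫ ω, g (f (W ω)) ∂μ) + (∫ ω, a1 ω ∂μ) * (∫ ω, ζ ω ∂μ)
            + (∫ ω, a2 ω ∂μ) * (∫ ω, (ζ ω)^2 ∂μ) / 2)|
      ≤ M2 * (∫ ω in {ω | K < |ζ ω|}, (ζ ω)^2 ∂μ)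
        + M3 / 6 * (∫ ω in {ω | |ζ ω| ≤ K}, |ζ ω|^3 ∂μ) := by
    intro ζ hζm hζI hζ2 hindζ
    have hζint : Integrable ζ μ := hζ2.integrable one_le_two
    have hζ2int : Integrable (fun ω => (ζ ω)^2) μ := hζ2.integrable_sq
    have hζ2m : Measurable (fun ω => (ζ ω)^2) := hζm.pow_const 2
    have hindζ2 : IndepFun W (fun ω => (ζ ω)^2) μ :=
      hindζ.comp measurable_id ((continuous_pow 2).measurable)
    have hbigm : Measurable (fun ω => g (f (Function.update (W ω) i (ζ ω)))) := by
      have he : (fun ω => g (f (Function.update (W ω) i (ζ ω))))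
          = fun ω => g (ft (Function.update (W ω) i (ζ ω))) := by
        funext ω; rw [hfteq _ (hupd_box hζI ω)]
      rw [he]
      exact (hgc.comp hftc).measurable.comp (hupdm hζm)
    have hbigb : ∀ ω, |g (f (Function.update (W ω) i (ζ ω)))|
        ≤ |g (f (W ω))| + C1 * |ζ ω| := by
      intro ω
      have h1 : |psi n f g i (W ω) (ζ ω) - psi n f g i (W ω) 0| ≤ C1 * |ζ ω - 0| :=
        hψlip ω _ (hζI ω) 0 hI0
      rw [sub_zero] at h1
      have h5 : |psi n f g i (W ω) (ζ ω)| ≤ |psi n f g i (W ω) 0|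
          + |psi n f g i (W ω) (ζ ω) - psi n f g i (W ω) 0| := by
        have := abs_add_le (psi n f g i (W ω) 0)
          (psi n f g i (W ω) (ζ ω) - psi n f g i (W ω) 0)
        simpa using this
      have h6 : |psi n f g i (W ω) (ζ ω)| ≤ |g (f (W ω))| + C1 * |ζ ω| := by
        rw [hψ0 ω] at h5 h1
        linarith
      exact h6
    have hbigint : Integrable (fun ω => g (f (Function.update (W ω) i (ζ ω)))) μ :=
      Integrable.mono' (hgfWint.abs.add (hζint.abs.const_mul C1))
        hbigm.aestronglyMeasurable
        (Filter.Eventually.of_forall fun ω => by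
          rw [Real.norm_eq_abs]; exact hbigb ω)
    have ha1ζint : Integrable (fun ω => a1 ω * ζ ω) μ :=
      Integrable.mono' (hζint.abs.const_mul C1) (ha1m.mul hζm).aestronglyMeasurable
        (Filter.Eventually.of_forall fun ω => by
          rw [Real.norm_eq_abs, abs_mul]
          exact mul_le_mul_of_nonneg_right (ha1b ω) (abs_nonneg _))
    have ha2ζ2int : Integrable (fun ω => a2 ω * (ζ ω)^2) μ :=
      Integrable.mono' (hζ2int.abs.const_mul M2) (ha2m.mul hζ2m).aestronglyMeasurable
        (Filter.Eventually.of_forall fun ω => by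
          rw [Real.norm_eq_abs, abs_mul]
          refine mul_le_mul_of_nonneg_right (ha2b ω) (abs_nonneg _) |>.trans ?_
          rw [abs_of_nonneg (sq_nonneg _)])
    set R : Ω → ℝ := fun ω => g (f (Function.update (W ω) i (ζ ω))) - g (f (W ω))
      - a1 ω * ζ ω - a2 ω * (ζ ω)^2/2 with hRdef
    have hRb : ∀ ω, |R ω| ≤ min (M2 * (ζ ω)^2) (M3 / 6 * |ζ ω|^3) := by
      intro ω
      have ht := psi_taylor (i := i) (x := W ω) hIopen hIconn hI0 hf hg hB1 hB2 hB3
        hbdd2 hbdd3 (hWI ω) (ζ ω) (hζI ω)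
      rw [hψ0 ω] at ht
      have he2 : (B1 + 3*B2 + B3) * lam n I f 3 * |ζ ω|^3 / 6 = M3/6 * |ζ ω|^3 := by
        rw [hM3def, hL3def]; ring
      rw [he2] at ht
      exact ht
    have hRm : Measurable R :=
      ((hbigm.sub hgfWm).sub (ha1m.mul hζm)).sub ((ha2m.mul hζ2m).div_const 2)
    have hRint : Integrable R μ :=
      ((hbigint.sub hgfWint).sub ha1ζint).sub (ha2ζ2int.div_const 2)
    have hexp : (fun ω => g (f (Function.update (W ω) i (ζ ω))))
        = fun ω => g (f (W ω)) + a1 ω * ζ ω + a2 ω * (ζ ω)^2/2 + R ω := by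
      funext ω; rw [hRdef]; ring
    have hint1 : ∫ ω, g (f (Function.update (W ω) i (ζ ω))) ∂μ
        = (∫ ω, g (f (W ω)) ∂μ) + (∫ ω, a1 ω * ζ ω ∂μ)
          + (∫ ω, a2 ω * (ζ ω)^2/2 ∂μ) + ∫ ω, R ω ∂μ := by
      rw [hexp]
      have i3 : Integrable (fun ω => g (f (W ω)) + a1 ω * ζ ω) μ := by
        exact hgfWint.add ha1ζint
      have i2 : Integrable (fun ω => g (f (W ω)) + a1 ω * ζ ω + a2 ω * (ζ ω)^2/2) μ := by
        exact i3.add (ha2ζ2int.div_const 2)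
      rw [integral_add i2 hRint, integral_add i3 (ha2ζ2int.div_const 2),
        integral_add hgfWint ha1ζint]
    have hfac1 : ∫ ω, a1 ω * ζ ω ∂μ = (∫ ω, a1 ω ∂μ) * ∫ ω, ζ ω ∂μ :=
      (hD1pack 0 hI0).2 ζ hζm hζint hindζ
    have hD1intc : ∀ c, c ∈ I → Integrable (fun ω => psiD1 n f g i (W ω) c) μ :=
      fun c hc => hbint _ C1 (hD1pack c hc).1 (fun ω => hD1b ω c hc)
    have hD1ζ2int : ∀ c, c ∈ I →
        Integrable (fun ω => psiD1 n f g i (W ω) c * (ζ ω)^2) μ := by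
      intro c hc
      refine Integrable.mono' (hζ2int.abs.const_mul C1)
        (((hD1pack c hc).1.mul hζ2m).aestronglyMeasurable)
        (Filter.Eventually.of_forall fun ω => ?_)
      rw [Real.norm_eq_abs, abs_mul]
      refine mul_le_mul_of_nonneg_right (hD1b ω c hc) (abs_nonneg _) |>.trans ?_
      rw [abs_of_nonneg (sq_nonneg _)]
    have hfac2 : ∫ ω, a2 ω * (ζ ω)^2 ∂μ = (∫ ω, a2 ω ∂μ) * ∫ ω, (ζ ω)^2 ∂μ := by
      refine factor_limit q2 hq2m M2 hq2b hq2lim hζ2m hζ2int (fun m => ?_)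
      have e1 := (hD1pack (tm m) (htmmem m)).2 _ hζ2m hζ2int hindζ2
      have e0 := (hD1pack 0 hI0).2 _ hζ2m hζ2int hindζ2
      have hq2eq : (fun ω => q2 m ω * (ζ ω)^2)
          = fun ω => (psiD1 n f g i (W ω) (tm m) * (ζ ω)^2
              - psiD1 n f g i (W ω) 0 * (ζ ω)^2) / tm m := by
        funext ω; rw [hq2def]; ring
      have hq2int : ∫ ω, q2 m ω ∂μ
          = ((∫ ω, psiD1 n f g i (W ω) (tm m) ∂μ)
            - ∫ ω, psiD1 n f g i (W ω) 0 ∂μ) / tm m := by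
        rw [hq2def]
        simp only
        rw [integral_div, integral_sub (hD1intc _ (htmmem m)) (hD1intc _ hI0)]
      rw [hq2eq, integral_div,
        integral_sub (hD1ζ2int _ (htmmem m)) (hD1ζ2int _ hI0), e1, e0, hq2int]
      ring
    have hfac2' : ∫ ω, a2 ω * (ζ ω)^2/2 ∂μ
        = (∫ ω, a2 ω ∂μ) * (∫ ω, (ζ ω)^2 ∂μ) / 2 := by
      have : (fun ω => a2 ω * (ζ ω)^2/2) = fun ω => (a2 ω * (ζ ω)^2)/2 := by
        funext ω; ring
      rw [this, integral_div, hfac2]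
    -- remainder bound
    have hA : MeasurableSet {ω | K < |ζ ω|} :=
      measurableSet_lt measurable_const hζm.abs
    have hAc : MeasurableSet {ω | |ζ ω| ≤ K} :=
      measurableSet_le hζm.abs measurable_const
    have hcompl : ({ω | K < |ζ ω|})ᶜ = {ω | |ζ ω| ≤ K} := by
      ext ω; simp [not_lt]
    have hsplit : ∫ ω, |R ω| ∂μ = (∫ ω in {ω | K < |ζ ω|}, |R ω| ∂μ)
        + ∫ ω in {ω | |ζ ω| ≤ K}, |R ω| ∂μ := by
      rw [← hcompl]
      exact (integral_add_compl hA hRint.abs).symm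
    have hb1 : ∫ ω in {ω | K < |ζ ω|}, |R ω| ∂μ
        ≤ M2 * ∫ ω in {ω | K < |ζ ω|}, (ζ ω)^2 ∂μ := by
      rw [← integral_const_mul]
      exact setIntegral_mono_on hRint.abs.integrableOn
        ((hζ2int.const_mul M2).integrableOn) hA
        (fun ω _ => (hRb ω).trans (min_le_left _ _))
    have hb2 : ∫ ω in {ω | |ζ ω| ≤ K}, |R ω| ∂μ
        ≤ M3/6 * ∫ ω in {ω | |ζ ω| ≤ K}, |ζ ω|^3 ∂μ := by
      rw [← integral_const_mul]
      refine setIntegral_mono_on hRint.abs.integrableOn ?_ hAc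
        (fun ω _ => (hRb ω).trans (min_le_right _ _))
      refine Integrable.mono' (((hζ2int.const_mul K).const_mul (M3/6)).integrableOn)
        (((hζm.abs.pow_const 3).const_mul (M3/6)).aestronglyMeasurable.restrict)
        ?_
      rw [ae_restrict_iff' hAc]
      refine Filter.Eventually.of_forall (fun ω hω => ?_)
      have hωK : |ζ ω| ≤ K := hω
      rw [Real.norm_eq_abs, abs_mul, abs_of_nonneg (by positivity : (0:ℝ) ≤ M3/6),
        abs_of_nonneg (by positivity : (0:ℝ) ≤ |ζ ω|^3)]
      have : |ζ ω|^3 ≤ K * (ζ ω)^2 := by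
        have h7 : |ζ ω|^3 = |ζ ω| * (ζ ω)^2 := by rw [← sq_abs]; ring
        rw [h7]
        exact mul_le_mul_of_nonneg_right hωK (sq_nonneg _)
      exact mul_le_mul_of_nonneg_left this (by positivity)
    have habs : |∫ ω, R ω ∂μ| ≤ ∫ ω, |R ω| ∂μ := by
      have := norm_integral_le_integral_norm (μ := μ) R
      simpa [Real.norm_eq_abs] using this
    rw [hint1, hfac1, hfac2']
    have hre : (∫ ω, g (f (W ω)) ∂μ) + (∫ ω, a1 ω ∂μ) * (∫ ω, ζ ω ∂μ)
        + (∫ ω, a2 ω ∂μ) * (∫ ω, (ζ ω)^2 ∂μ) / 2 + (∫ ω, R ω ∂μ)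
        - ((∫ ω, g (f (W ω)) ∂μ) + (∫ ω, a1 ω ∂μ) * (∫ ω, ζ ω ∂μ)
          + (∫ ω, a2 ω ∂μ) * (∫ ω, (ζ ω)^2 ∂μ) / 2) = ∫ ω, R ω ∂μ := by ring
    rw [hre]
    calc |∫ ω, R ω ∂μ| ≤ ∫ ω, |R ω| ∂μ := habs
      _ = _ + _ := hsplit
      _ ≤ M2 * (∫ ω in {ω | K < |ζ ω|}, (ζ ω)^2 ∂μ)
          + M3/6 * (∫ ω in {ω | |ζ ω| ≤ K}, |ζ ω|^3 ∂μ) := add_le_add hb1 hb2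
  -- combine the two sides
  have k1 := hside ξ hξm hξI hξ2 hindξ
  have k2 := hside η hηm hηI hη2 hindη
  rw [hmeanE, hvarE] at k1
  set S := (∫ ω, g (f (W ω)) ∂μ) + (∫ ω, a1 ω ∂μ) * (∫ ω, η ω ∂μ)
      + (∫ ω, a2 ω ∂μ) * (∫ ω, (η ω)^2 ∂μ) / 2 with hSdef
  have htri : |(∫ ω, g (f (Function.update (W ω) i (ξ ω))) ∂μ)
      - ∫ ω, g (f (Function.update (W ω) i (η ω))) ∂μ|
      ≤ |(∫ ω, g (f (Function.update (W ω) i (ξ ω))) ∂μ) - S|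
        + |(∫ ω, g (f (Function.update (W ω) i (η ω))) ∂μ) - S| := by
    have := abs_sub_le (∫ ω, g (f (Function.update (W ω) i (ξ ω))) ∂μ) S
      (∫ ω, g (f (Function.update (W ω) i (η ω))) ∂μ)
    rw [abs_sub_comm S (∫ ω, g (f (Function.update (W ω) i (η ω))) ∂μ)] at this
    exact this
  refine htri.trans ?_
  have := add_le_add k1 k2
  refine this.trans (le_of_eq ?_)
  ring

end Swap

section Indep

variable {Ω : Type} [MeasurableSpace Ω] {μ : Measure Ω}

lemma indep_tuple {n : ℕ} (X Y : Fin n → Ω → ℝ)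
    (hXmeas : ∀ i, Measurable (X i)) (hYmeas : ∀ i, Measurable (Y i))
    (hindep : iIndepFun (Sum.elim X Y) μ)
    (k : ℕ) (hk : k < n) (W : Ω → Fin n → ℝ)
    (hW : ∀ ω j, W ω j = if (j:ℕ) < k then Y j ω else if (j:ℕ) = k then 0 else X j ω) :
    IndepFun W (X ⟨k, hk⟩) μ ∧ IndepFun W (Y ⟨k, hk⟩) μ := by
  classical
  have hmeas' : ∀ s : Fin n ⊕ Fin n, Measurable (Sum.elim X Y s) := by
    intro s
    cases s with
    | inl j => exact hXmeas j
    | inr j => exact hYmeas j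
  constructor
  · -- independence from X k
    set e : Fin n ⊕ Fin n := Sum.inl ⟨k, hk⟩ with hedef
    set S : Finset (Fin n ⊕ Fin n) := Finset.univ.erase e with hSdef
    set T : Finset (Fin n ⊕ Fin n) := {e} with hTdef
    have hdisj : Disjoint S T := by
      rw [Finset.disjoint_singleton_right]
      exact Finset.notMem_erase e _
    have h0 := hindep.indepFun_finset S T hdisj hmeas'
    set Φ : ((s : S) → ℝ) → (Fin n → ℝ) := fun v j =>
      if h1 : (j:ℕ) < k then v ⟨Sum.inr j, by
        simp [hSdef, hedef]⟩
      else if h2 : (j:ℕ) = k then 0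
      else v ⟨Sum.inl j, by
        simp only [hSdef, Finset.mem_erase, Finset.mem_univ, and_true, hedef]
        intro hc
        rw [Sum.inl.injEq] at hc
        exact h2 (by rw [hc])⟩ with hΦdef
    have hΦm : Measurable Φ := by
      refine measurable_pi_lambda _ (fun j => ?_)
      by_cases h1 : (j:ℕ) < k
      · simpa [hΦdef, h1] using measurable_pi_apply _
      · by_cases h2 : (j:ℕ) = k
        · simp [hΦdef, h1, h2]
        · simpa [hΦdef, h1, h2] using measurable_pi_apply _
    set Ψ : ((s : T) → ℝ) → ℝ := fun v => v ⟨e, Finset.mem_singleton_self e⟩ with hΨdef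
    have hΨm : Measurable Ψ := measurable_pi_apply _
    have hcomp := h0.comp hΦm hΨm
    have e1 : (Φ ∘ fun a (i : S) => Sum.elim X Y (i : Fin n ⊕ Fin n) a) = W := by
      funext ω
      funext j
      rw [Function.comp_apply, hW ω j]
      by_cases h1 : (j:ℕ) < k
      · simp [hΦdef, h1]
      · by_cases h2 : (j:ℕ) = k
        · simp [hΦdef, h1, h2]
        · simp [hΦdef, h1, h2]
    have e2 : (Ψ ∘ fun a (i : T) => Sum.elim X Y (i : Fin n ⊕ Fin n) a) = X ⟨k, hk⟩ := by
      funext ω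
      simp [hΨdef, hedef]
    rw [e1, e2] at hcomp
    exact hcomp
  · -- independence from Y k
    set e : Fin n ⊕ Fin n := Sum.inr ⟨k, hk⟩ with hedef
    set S : Finset (Fin n ⊕ Fin n) := Finset.univ.erase e with hSdef
    set T : Finset (Fin n ⊕ Fin n) := {e} with hTdef
    have hdisj : Disjoint S T := by
      rw [Finset.disjoint_singleton_right]
      exact Finset.notMem_erase e _
    have h0 := hindep.indepFun_finset S T hdisj hmeas'
    set Φ : ((s : S) → ℝ) → (Fin n → ℝ) := fun v j =>
      if h1 : (j:ℕ) < k then v ⟨Sum.inr j, by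
        simp only [hSdef, Finset.mem_erase, Finset.mem_univ, and_true, hedef]
        intro hc
        rw [Sum.inr.injEq] at hc
        have : (j:ℕ) = k := by rw [hc]
        omega⟩
      else if h2 : (j:ℕ) = k then 0
      else v ⟨Sum.inl j, by simp [hSdef, hedef]⟩ with hΦdef
    have hΦm : Measurable Φ := by
      refine measurable_pi_lambda _ (fun j => ?_)
      by_cases h1 : (j:ℕ) < k
      · simpa [hΦdef, h1] using measurable_pi_apply _
      · by_cases h2 : (j:ℕ) = k
        · simp [hΦdef, h1, h2]
        · simpa [hΦdef, h1, h2] using measurable_pi_apply _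
    set Ψ : ((s : T) → ℝ) → ℝ := fun v => v ⟨e, Finset.mem_singleton_self e⟩ with hΨdef
    have hΨm : Measurable Ψ := measurable_pi_apply _
    have hcomp := h0.comp hΦm hΨm
    have e1 : (Φ ∘ fun a (i : S) => Sum.elim X Y (i : Fin n ⊕ Fin n) a) = W := by
      funext ω
      funext j
      rw [Function.comp_apply, hW ω j]
      by_cases h1 : (j:ℕ) < k
      · simp [hΦdef, h1]
      · by_cases h2 : (j:ℕ) = k
        · simp [hΦdef, h1, h2]
        · simp [hΦdef, h1, h2]
    have e2 : (Ψ ∘ fun a (i : T) => Sum.elim X Y (i : Fin n ⊕ Fin n) a) = Y ⟨k, hk⟩ := by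
      funext ω
      simp [hΨdef, hedef]
    rw [e1, e2] at hcomp
    exact hcomp

end Indep

theorem stmt0
    {Ω : Type} [MeasurableSpace Ω] {μ : Measure Ω} [IsProbabilityMeasure μ]
    {n : ℕ} {I : Set ℝ} (hIopen : IsOpen I) (hIconn : I.OrdConnected)
    (hI0 : (0 : ℝ) ∈ I)
    (X Y : Fin n → Ω → ℝ)
    (hXmeas : ∀ i, Measurable (X i)) (hYmeas : ∀ i, Measurable (Y i))
    (hXI : ∀ i ω, X i ω ∈ I) (hYI : ∀ i ω, Y i ω ∈ I)
    (hindep : iIndepFun (Sum.elim X Y) μ)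
    (hX2 : ∀ i, MemLp (X i) 2 μ) (hY2 : ∀ i, MemLp (Y i) 2 μ)
    (hmean : ∀ i, ∫ ω, X i ω ∂μ = ∫ ω, Y i ω ∂μ)
    (hvar : ∀ i, ∫ ω, (X i ω) ^ 2 ∂μ = ∫ ω, (Y i ω) ^ 2 ∂μ)
    (f : (Fin n → ℝ) → ℝ) (hf : CoordDiff3 n I f)
    (hbdd2 : BddAbove (lamSet n I f 2)) (hbdd3 : BddAbove (lamSet n I f 3))
    (g : ℝ → ℝ) (hg : ∀ p < 3, Differentiable ℝ (iteratedDeriv p g))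
    (B1 B2 B3 : ℝ)
    (hB1 : ∀ t, |deriv g t| ≤ B1)
    (hB2 : ∀ t, |iteratedDeriv 2 g t| ≤ B2)
    (hB3 : ∀ t, |iteratedDeriv 3 g t| ≤ B3)
    (K : ℝ) (hK : 0 < K) :
    |(∫ ω, g (f fun i => X i ω) ∂μ) - ∫ ω, g (f fun i => Y i ω) ∂μ| ≤
      (B1 + B2) * lam n I f 2 *
        (∑ i, ((∫ ω in {ω | K < |X i ω|}, (X i ω) ^ 2 ∂μ) +
          ∫ ω in {ω | K < |Y i ω|}, (Y i ω) ^ 2 ∂μ)) +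
      (B1 / 6 + B2 / 2 + B3 / 6) * lam n I f 3 *
        (∑ i, ((∫ ω in {ω | |X i ω| ≤ K}, |X i ω| ^ 3 ∂μ) +
          ∫ ω in {ω | |Y i ω| ≤ K}, |Y i ω| ^ 3 ∂μ)) := by
  classical
  obtain ⟨ft, hftc, hfteq⟩ := f_ext hIopen hIconn hf hbdd2
  set Zk : ℕ → Ω → Fin n → ℝ :=
    fun k ω j => if (j:ℕ) < k then Y j ω else X j ω with hZkdef
  set Wk : ℕ → Ω → Fin n → ℝ :=
    fun k ω j => if (j:ℕ) < k then Y j ω else if (j:ℕ) = k then 0 else X j ω with hWkdef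
  set G : ℕ → ℝ := fun k => ∫ ω, g (f (Zk k ω)) ∂μ with hGdef
  have hZ0 : ∀ ω, Zk 0 ω = fun j => X j ω := by
    intro ω; funext j; simp [hZkdef]
  have hZn : ∀ ω, Zk n ω = fun j => Y j ω := by
    intro ω; funext j; simp [hZkdef, j.isLt]
  have htel : (∫ ω, g (f fun i => X i ω) ∂μ) - (∫ ω, g (f fun i => Y i ω) ∂μ)
      = ∑ k ∈ Finset.range n, (G k - G (k+1)) := by
    rw [Finset.sum_range_sub' G n]
    have e0 : G 0 = ∫ ω, g (f fun i => X i ω) ∂μ := by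
      rw [hGdef]
      exact integral_congr_ae (Filter.Eventually.of_forall fun ω => by show g (f (Zk 0 ω)) = g (f fun i => X i ω); rw [hZ0 ω])
    have en : G n = ∫ ω, g (f fun i => Y i ω) ∂μ := by
      rw [hGdef]
      exact integral_congr_ae (Filter.Eventually.of_forall fun ω => by show g (f (Zk n ω)) = g (f fun i => Y i ω); rw [hZn ω])
    rw [e0, en]
  set T : ℕ → ℝ := fun k => if h : k < n then
      (B1+B2) * lam n I f 2 *
        ((∫ ω in {ω | K < |X ⟨k,h⟩ ω|}, (X ⟨k,h⟩ ω)^2 ∂μ)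
          + ∫ ω in {ω | K < |Y ⟨k,h⟩ ω|}, (Y ⟨k,h⟩ ω)^2 ∂μ)
      + (B1 + 3*B2 + B3) * lam n I f 3 / 6 *
        ((∫ ω in {ω | |X ⟨k,h⟩ ω| ≤ K}, |X ⟨k,h⟩ ω|^3 ∂μ)
          + ∫ ω in {ω | |Y ⟨k,h⟩ ω| ≤ K}, |Y ⟨k,h⟩ ω|^3 ∂μ)
    else 0 with hTdef
  have hstep : ∀ k ∈ Finset.range n, |G k - G (k+1)| ≤ T k := by
    intro k hkr
    have hk : k < n := Finset.mem_range.1 hkr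
    set i : Fin n := ⟨k, hk⟩ with hidef
    have hZW1 : ∀ ω, Zk k ω = Function.update (Wk k ω) i (X i ω) := by
      intro ω; funext j
      rcases eq_or_ne j i with h | h
      · subst h
        simp [hZkdef, hWkdef, hidef]
      · rw [Function.update_of_ne h]
        have hjk : (j:ℕ) ≠ k := fun hc => h (Fin.ext (by rw [hc, hidef]))
        by_cases hlt : (j:ℕ) < k
        · simp [hZkdef, hWkdef, hlt]
        · simp [hZkdef, hWkdef, hlt, hjk]
    have hZW2 : ∀ ω, Zk (k+1) ω = Function.update (Wk k ω) i (Y i ω) := by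
      intro ω; funext j
      rcases eq_or_ne j i with h | h
      · subst h
        simp [hZkdef, hWkdef, hidef]
      · rw [Function.update_of_ne h]
        have hjk : (j:ℕ) ≠ k := fun hc => h (Fin.ext (by rw [hc, hidef]))
        by_cases hlt : (j:ℕ) < k
        · have : (j:ℕ) < k + 1 := Nat.lt_succ_of_lt hlt
          simp [hZkdef, hWkdef, hlt, this]
        · have h2 : ¬ (j:ℕ) < k + 1 := by omega
          simp [hZkdef, hWkdef, hlt, h2, hjk]
    have hWm : Measurable (Wk k) := by
      refine measurable_pi_lambda _ (fun j => ?_)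
      by_cases h1 : (j:ℕ) < k
      · simpa [hWkdef, h1] using hYmeas j
      · by_cases h2 : (j:ℕ) = k
        · simp [hWkdef, h1, h2]
        · simpa [hWkdef, h1, h2] using hXmeas j
    have hWI : ∀ ω j, Wk k ω j ∈ I := by
      intro ω j
      by_cases h1 : (j:ℕ) < k
      · simpa [hWkdef, h1] using hYI j ω
      · by_cases h2 : (j:ℕ) = k
        · simpa [hWkdef, h1, h2] using hI0
        · simpa [hWkdef, h1, h2] using hXI j ω
    have hWi0 : ∀ ω, Wk k ω i = 0 := by
      intro ω
      simp [hWkdef, hidef]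
    have hWint : ∀ j, Integrable (fun ω => Wk k ω j) μ := by
      intro j
      by_cases h1 : (j:ℕ) < k
      · simpa [hWkdef, h1] using (hY2 j).integrable one_le_two
      · by_cases h2 : (j:ℕ) = k
        · have : (fun ω => Wk k ω j) = fun _ => (0:ℝ) := by
            funext ω; simp [hWkdef, h1, h2]
          rw [this]
          exact integrable_const 0
        · simpa [hWkdef, h1, h2] using (hX2 j).integrable one_le_two
    obtain ⟨hindX, hindY⟩ := indep_tuple X Y hXmeas hYmeas hindep k hk (Wk k)
      (fun ω j => by simp [hWkdef])
    have hres := swap_est hIopen hIconn hI0 hf hbdd2 hbdd3 hg hB1 hB2 hB3 hftc hfteq K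
      i (Wk k) hWm hWI hWi0 hWint (X i) (Y i) (hXmeas i) (hYmeas i)
      (fun ω => hXI i ω) (fun ω => hYI i ω) (hX2 i) (hY2 i) hindX hindY (hmean i) (hvar i)
    have hGk : G k = ∫ ω, g (f (Function.update (Wk k ω) i (X i ω))) ∂μ := by
      rw [hGdef]
      exact integral_congr_ae (Filter.Eventually.of_forall fun ω => by show g (f (Zk k ω)) = g (f (Function.update (Wk k ω) i (X i ω))); rw [hZW1 ω])
    have hGk1 : G (k+1) = ∫ ω, g (f (Function.update (Wk k ω) i (Y i ω))) ∂μ := by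
      rw [hGdef]
      exact integral_congr_ae (Filter.Eventually.of_forall fun ω => by show g (f (Zk (k+1) ω)) = g (f (Function.update (Wk k ω) i (Y i ω))); rw [hZW2 ω])
    rw [hGk, hGk1, hTdef]
    simp only [dif_pos hk]
    exact hres
  calc |(∫ ω, g (f fun i => X i ω) ∂μ) - ∫ ω, g (f fun i => Y i ω) ∂μ|
      = |∑ k ∈ Finset.range n, (G k - G (k+1))| := by rw [htel]
    _ ≤ ∑ k ∈ Finset.range n, |G k - G (k+1)| := Finset.abs_sum_le_sum_abs _ _
    _ ≤ ∑ k ∈ Finset.range n, T k := Finset.sum_le_sum hstep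
    _ = ∑ i : Fin n, T i := (Fin.sum_univ_eq_sum_range T n).symm
    _ = _ := by
      rw [Finset.mul_sum, Finset.mul_sum, ← Finset.sum_add_distrib]
      refine Finset.sum_congr rfl (fun i _ => ?_)
      rw [hTdef]
      simp only [dif_pos i.isLt, Fin.eta]
      ring
end

section
/- Let I be an open interval containing 0, let 𝔉 be a finite nonempty collection of functions from Iⁿ to ℝ, each thrice differentiable in each coordinate with uniformly bounded first, second and third coordinate partial derivatives, and let α ≥ 1. Define F : Iⁿ → ℝ by F(x) := α⁻¹ log( Σ_{f∈𝔉} e^{α f(x)} ). Then λ₂(F) ≤ 3 α λ₂(𝔉) and λ₃(F) ≤ 13 α² λ₃(𝔉). -/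
open Real



open MeasureTheory ProbabilityTheory

/-- The set whose supremum is `λ_r(𝔉)` for a family `𝔉 = (f k)`. -/
def lamFamSet (n : ℕ) (I : Set ℝ) {κ : Type} (f : κ → (Fin n → ℝ) → ℝ)
    (r : ℕ) : Set ℝ :=
  ⋃ k, lamSet n I (f k) r

/-- `λ_r(𝔉) = sup_{f ∈ 𝔉} λ_r(f)`. -/
noncomputable def lamFam (n : ℕ) (I : Set ℝ) {κ : Type}
    (f : κ → (Fin n → ℝ) → ℝ) (r : ℕ) : ℝ :=
  sSup (lamFamSet n I f r)


section core
variable {κ : Type} [Fintype κ] [Nonempty κ]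

set_option maxHeartbeats 2000000 in
lemma core {I : Set ℝ} (hIopen : IsOpen I)
    (g : κ → ℝ → ℝ) (hg : ∀ k, ∀ p < 3, DifferentiableOn ℝ (iteratedDeriv p (g k)) I)
    {α : ℝ} (hα : 0 < α) {M1 M2 M3 : ℝ} (hM1 : 0 ≤ M1) (hM2 : 0 ≤ M2) (hM3 : 0 ≤ M3)
    (hb1 : ∀ k, ∀ t ∈ I, |deriv (g k) t| ≤ M1)
    (hb2 : ∀ k, ∀ t ∈ I, |deriv (deriv (g k)) t| ≤ M2)
    (hb3 : ∀ k, ∀ t ∈ I, |deriv (deriv (deriv (g k))) t| ≤ M3)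
    (h : ℝ → ℝ) (hh : ∀ t, h t = α⁻¹ * Real.log (∑ k, Real.exp (α * g k t))) :
    ∀ t ∈ I, |iteratedDeriv 1 h t| ≤ M1 ∧
      |iteratedDeriv 2 h t| ≤ M2 + 2 * α * M1 ^ 2 ∧
      |iteratedDeriv 3 h t| ≤ M3 + 6 * α * M1 * M2 + 6 * α ^ 2 * M1 ^ 3 := by
  -- abbreviations
  set d1 : κ → ℝ → ℝ := fun k => deriv (g k) with hd1def
  set d2 : κ → ℝ → ℝ := fun k => deriv (deriv (g k)) with hd2def
  set d3 : κ → ℝ → ℝ := fun k => deriv (deriv (deriv (g k))) with hd3def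
  set E : κ → ℝ → ℝ := fun k t => Real.exp (α * g k t) with hEdef
  set S : ℝ → ℝ := fun t => ∑ k, E k t with hSdef
  set S1 : ℝ → ℝ := fun t => ∑ k, (α * d1 k t) * E k t with hS1def
  set S2 : ℝ → ℝ := fun t => ∑ k, (α * d2 k t + (α * d1 k t) ^ 2) * E k t with hS2def
  set S3 : ℝ → ℝ := fun t => ∑ k,
      (α * d3 k t + 3 * (α * d2 k t) * (α * d1 k t) + (α * d1 k t) ^ 3) * E k t with hS3def
  have hS0 : ∀ t, 0 < S t := fun t =>
    Finset.sum_pos (fun k _ => Real.exp_pos _) Finset.univ_nonempty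
  have hSne : ∀ t, S t ≠ 0 := fun t => (hS0 t).ne'
  -- differentiability of g and its derivatives at points of I
  have hgd : ∀ k, ∀ t ∈ I, HasDerivAt (g k) (d1 k t) t := by
    intro k t ht
    have := (hg k 0 (by norm_num))
    rw [iteratedDeriv_zero] at this
    exact (this.differentiableAt (hIopen.mem_nhds ht)).hasDerivAt
  have hgd1 : ∀ k, ∀ t ∈ I, HasDerivAt (d1 k) (d2 k t) t := by
    intro k t ht
    have := (hg k 1 (by norm_num))
    rw [iteratedDeriv_one] at this
    exact (this.differentiableAt (hIopen.mem_nhds ht)).hasDerivAt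
  have hgd2 : ∀ k, ∀ t ∈ I, HasDerivAt (d2 k) (d3 k t) t := by
    intro k t ht
    have := (hg k 2 (by norm_num))
    rw [iteratedDeriv_succ, iteratedDeriv_one] at this
    exact (this.differentiableAt (hIopen.mem_nhds ht)).hasDerivAt
  have hE : ∀ k, ∀ t ∈ I, HasDerivAt (E k) ((α * d1 k t) * E k t) t := by
    intro k t ht
    have := (((hgd k t ht).const_mul α).exp)
    simpa [hEdef, mul_comm] using this
  have hHS : ∀ t ∈ I, HasDerivAt S (S1 t) t := by
    intro t ht
    exact HasDerivAt.fun_sum fun k _ => hE k t ht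
  have hHS1 : ∀ t ∈ I, HasDerivAt S1 (S2 t) t := by
    intro t ht
    refine HasDerivAt.fun_sum fun k _ => ?_
    have := ((hgd1 k t ht).const_mul α).fun_mul (hE k t ht)
    exact this.congr_deriv (by ring)
  have hHS2 : ∀ t ∈ I, HasDerivAt S2 (S3 t) t := by
    intro t ht
    refine HasDerivAt.fun_sum fun k _ => ?_
    have hA : HasDerivAt (fun t => α * d2 k t + (α * d1 k t) ^ 2)
        (α * d3 k t + 2 * (α * d1 k t) * (α * d2 k t)) t := by
      have h1 := (hgd2 k t ht).const_mul α
      have h2 := ((hgd1 k t ht).const_mul α).fun_pow 2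
      exact (h1.fun_add h2).congr_deriv (by ring)
    have := hA.fun_mul (hE k t ht)
    exact this.congr_deriv (by ring)
  -- derivative formulas for h
  have hfun : h = fun t => α⁻¹ * Real.log (S t) := funext fun t => hh t
  set Q1 : ℝ → ℝ := fun t => S1 t / S t with hQ1def
  set Q2 : ℝ → ℝ := fun t => S2 t / S t with hQ2def
  set Q3 : ℝ → ℝ := fun t => S3 t / S t with hQ3def
  set H1 : ℝ → ℝ := fun t => α⁻¹ * Q1 t with hH1def
  set H2 : ℝ → ℝ := fun t => α⁻¹ * (Q2 t - Q1 t ^ 2) with hH2def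
  set H3 : ℝ → ℝ := fun t => α⁻¹ * (Q3 t - 3 * Q1 t * Q2 t + 2 * Q1 t ^ 3) with hH3def
  have hHh : ∀ t ∈ I, HasDerivAt h (H1 t) t := by
    intro t ht
    rw [hfun]
    have := ((hHS t ht).log (hSne t)).const_mul α⁻¹
    simpa [hH1def, hQ1def] using this
  have hHH1 : ∀ t ∈ I, HasDerivAt H1 (H2 t) t := by
    intro t ht
    have := (((hHS1 t ht).fun_div (hHS t ht) (hSne t))).const_mul α⁻¹
    refine this.congr_deriv ?_
    simp only [hH2def, hQ2def, hQ1def]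
    field_simp
  have hHH2 : ∀ t ∈ I, HasDerivAt H2 (H3 t) t := by
    intro t ht
    have hnum : HasDerivAt (fun t => S2 t * S t - S1 t * S1 t)
        (S3 t * S t + S2 t * S1 t - (S2 t * S1 t + S1 t * S2 t)) t :=
      ((hHS2 t ht).fun_mul (hHS t ht)).fun_sub ((hHS1 t ht).fun_mul (hHS1 t ht))
    have hden : HasDerivAt (fun t => S t ^ 2) (2 * S t ^ 1 * S1 t) t := by
      simpa using (hHS t ht).fun_pow 2
    have hdiv := hnum.fun_div hden (pow_ne_zero 2 (hSne t))
    have hH2' : H2 = fun t => α⁻¹ * ((S2 t * S t - S1 t * S1 t) / S t ^ 2) := by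
      funext s
      simp only [hH2def, hQ2def, hQ1def]
      field_simp
    rw [hH2']
    have := hdiv.const_mul α⁻¹
    refine this.congr_deriv ?_
    simp only [hH3def, hQ3def, hQ2def, hQ1def]
    field_simp
    ring
  -- iterated derivative identities on I
  have e1 : ∀ s ∈ I, deriv h s = H1 s := fun s hs => (hHh s hs).deriv
  have e2 : ∀ s ∈ I, deriv H1 s = H2 s := fun s hs => (hHH1 s hs).deriv
  have e3 : ∀ s ∈ I, deriv H2 s = H3 s := fun s hs => (hHH2 s hs).deriv
  have i1 : ∀ s ∈ I, iteratedDeriv 1 h s = H1 s := by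
    intro s hs; rw [iteratedDeriv_one]; exact e1 s hs
  have i2 : ∀ s ∈ I, iteratedDeriv 2 h s = H2 s := by
    intro s hs
    rw [iteratedDeriv_succ, iteratedDeriv_one]
    have hev : deriv h =ᶠ[nhds s] H1 := Filter.eventuallyEq_of_mem (hIopen.mem_nhds hs) e1
    rw [hev.deriv_eq]; exact e2 s hs
  intro t ht
  have i3 : iteratedDeriv 3 h t = H3 t := by
    rw [show (3:ℕ) = 2 + 1 from rfl, iteratedDeriv_succ]
    have hev : iteratedDeriv 2 h =ᶠ[nhds t] H2 := Filter.eventuallyEq_of_mem (hIopen.mem_nhds ht) i2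
    rw [hev.deriv_eq]; exact e3 t ht
  -- quotient bounds
  have key : ∀ (c : ℝ) (u : κ → ℝ), (∀ k, |u k| ≤ c) →
      |(∑ k, u k * E k t) / S t| ≤ c := by
    intro c u hu
    rw [abs_div, abs_of_pos (hS0 t), div_le_iff₀ (hS0 t)]
    calc |∑ k, u k * E k t| ≤ ∑ k, |u k * E k t| := Finset.abs_sum_le_sum_abs _ _
      _ ≤ ∑ k, c * E k t := by
          refine Finset.sum_le_sum fun k _ => ?_
          rw [abs_mul, abs_of_pos (Real.exp_pos _)]
          exact mul_le_mul_of_nonneg_right (hu k) (Real.exp_pos _).le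
      _ = c * S t := by rw [hSdef, Finset.mul_sum]
  have A1 : ∀ k, |α * d1 k t| ≤ α * M1 := by
    intro k; rw [abs_mul, abs_of_pos hα]
    exact mul_le_mul_of_nonneg_left (hb1 k t ht) hα.le
  have A2 : ∀ k, |α * d2 k t| ≤ α * M2 := by
    intro k; rw [abs_mul, abs_of_pos hα]
    exact mul_le_mul_of_nonneg_left (hb2 k t ht) hα.le
  have A3 : ∀ k, |α * d3 k t| ≤ α * M3 := by
    intro k; rw [abs_mul, abs_of_pos hα]
    exact mul_le_mul_of_nonneg_left (hb3 k t ht) hα.le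
  have bQ1 : |Q1 t| ≤ α * M1 := by
    rw [hQ1def]; exact key _ _ A1
  have bQ2 : |Q2 t| ≤ α * M2 + (α * M1) ^ 2 := by
    rw [hQ2def]
    refine key _ _ fun k => ?_
    calc |α * d2 k t + (α * d1 k t) ^ 2| ≤ |α * d2 k t| + |(α * d1 k t) ^ 2| := abs_add_le _ _
      _ ≤ α * M2 + (α * M1) ^ 2 := by
          refine add_le_add (A2 k) ?_
          rw [abs_pow]
          exact pow_le_pow_left₀ (abs_nonneg _) (A1 k) 2
  have bQ3 : |Q3 t| ≤ α * M3 + 3 * (α * M2) * (α * M1) + (α * M1) ^ 3 := by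
    rw [hQ3def]
    refine key _ _ fun k => ?_
    calc |α * d3 k t + 3 * (α * d2 k t) * (α * d1 k t) + (α * d1 k t) ^ 3|
        ≤ |α * d3 k t| + |3 * (α * d2 k t) * (α * d1 k t)| + |(α * d1 k t) ^ 3| :=
          abs_add_three _ _ _
      _ ≤ α * M3 + 3 * (α * M2) * (α * M1) + (α * M1) ^ 3 := by
          refine add_le_add (add_le_add (A3 k) ?_) ?_
          · rw [abs_mul, abs_mul]
            have h3 : |(3:ℝ)| = 3 := by norm_num
            rw [h3]
            refine mul_le_mul ?_ (A1 k) (abs_nonneg _) (by positivity)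
            exact mul_le_mul_of_nonneg_left (A2 k) (by norm_num)
          · rw [abs_pow]
            exact pow_le_pow_left₀ (abs_nonneg _) (A1 k) 3
  have hQ1n := abs_nonneg (Q1 t)
  have hQ2n := abs_nonneg (Q2 t)
  refine ⟨?_, ?_, ?_⟩
  · rw [i1 t ht, hH1def, abs_mul, abs_of_pos (inv_pos.2 hα), inv_mul_le_iff₀ hα]
    exact le_trans bQ1 (by nlinarith)
  · rw [i2 t ht, hH2def, abs_mul, abs_of_pos (inv_pos.2 hα), inv_mul_le_iff₀ hα]
    have h1 : |Q1 t ^ 2| ≤ (α * M1) ^ 2 := by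
      rw [abs_pow]; exact pow_le_pow_left₀ (abs_nonneg _) bQ1 2
    calc |Q2 t - Q1 t ^ 2| ≤ |Q2 t| + |Q1 t ^ 2| := by
          rw [sub_eq_add_neg]
          exact le_trans (abs_add_le _ _) (by rw [abs_neg])
      _ ≤ (α * M2 + (α * M1) ^ 2) + (α * M1) ^ 2 := add_le_add bQ2 h1
      _ = α * (M2 + 2 * α * M1 ^ 2) := by ring
  · rw [i3, hH3def, abs_mul, abs_of_pos (inv_pos.2 hα), inv_mul_le_iff₀ hα]
    have h1 : |Q1 t ^ 3| ≤ (α * M1) ^ 3 := by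
      rw [abs_pow]; exact pow_le_pow_left₀ (abs_nonneg _) bQ1 3
    have h2 : |Q1 t| * |Q2 t| ≤ (α * M1) * (α * M2 + (α * M1) ^ 2) :=
      mul_le_mul bQ1 bQ2 (abs_nonneg _) (by positivity)
    calc |Q3 t - 3 * Q1 t * Q2 t + 2 * Q1 t ^ 3|
        ≤ |Q3 t| + |(-(3 * Q1 t * Q2 t))| + |2 * Q1 t ^ 3| := by
          rw [sub_eq_add_neg]
          exact abs_add_three _ _ _
      _ = |Q3 t| + 3 * (|Q1 t| * |Q2 t|) + 2 * |Q1 t ^ 3| := by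
          rw [abs_neg, abs_mul, abs_mul, abs_mul]
          norm_num
          ring
      _ ≤ (α * M3 + 3 * (α * M2) * (α * M1) + (α * M1) ^ 3)
            + 3 * ((α * M1) * (α * M2 + (α * M1) ^ 2)) + 2 * (α * M1) ^ 3 := by
          refine add_le_add (add_le_add bQ3 ?_) ?_
          · exact mul_le_mul_of_nonneg_left h2 (by norm_num)
          · exact mul_le_mul_of_nonneg_left h1 (by norm_num)
      _ = α * (M3 + 6 * α * M1 * M2 + 6 * α ^ 2 * M1 ^ 3) := by ring
end core

lemma rpow_trick {a L : ℝ} (ha : 0 ≤ a) {p r : ℕ} (hp : 1 ≤ p) (hpr : p ≤ r)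
    (h : a ^ ((r : ℝ) / (p : ℝ)) ≤ L) : a ≤ L ^ ((p : ℝ) / (r : ℝ)) := by
  have hp0 : (0:ℝ) < p := by exact_mod_cast hp
  have hr0 : (0:ℝ) < r := by exact_mod_cast lt_of_lt_of_le hp hpr
  have key : a = (a ^ ((r : ℝ) / p)) ^ ((p : ℝ) / r) := by
    rw [← Real.rpow_mul ha]
    rw [show (r : ℝ) / p * ((p:ℝ)/r) = 1 by field_simp]
    rw [Real.rpow_one]
  rw [key]
  exact Real.rpow_le_rpow (Real.rpow_nonneg ha _) h (by positivity)

lemma boundF {n : ℕ} {I : Set ℝ} (hIopen : IsOpen I)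
    {κ : Type} [Fintype κ] [Nonempty κ]
    (f : κ → (Fin n → ℝ) → ℝ) (hf : ∀ k, CoordDiff3 n I (f k))
    {α : ℝ} (hα : 0 < α)
    (F : (Fin n → ℝ) → ℝ)
    (hF : ∀ x, F x = α⁻¹ * Real.log (∑ k, Real.exp (α * f k x)))
    {M1 M2 M3 : ℝ} (hM1 : 0 ≤ M1) (hM2 : 0 ≤ M2) (hM3 : 0 ≤ M3)
    (hb1 : ∀ (k : κ) (i : Fin n) (x : Fin n → ℝ), (∀ j, x j ∈ I) →
      |pderiv n (f k) i 1 x| ≤ M1)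
    (hb2 : ∀ (k : κ) (i : Fin n) (x : Fin n → ℝ), (∀ j, x j ∈ I) →
      |pderiv n (f k) i 2 x| ≤ M2)
    (hb3 : ∀ (k : κ) (i : Fin n) (x : Fin n → ℝ), (∀ j, x j ∈ I) →
      |pderiv n (f k) i 3 x| ≤ M3) :
    ∀ (i : Fin n) (x : Fin n → ℝ), (∀ j, x j ∈ I) →
      |pderiv n F i 1 x| ≤ M1 ∧
      |pderiv n F i 2 x| ≤ M2 + 2 * α * M1 ^ 2 ∧
      |pderiv n F i 3 x| ≤ M3 + 6 * α * M1 * M2 + 6 * α ^ 2 * M1 ^ 3 := by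
  intro i x hx
  have hxmem : ∀ t ∈ I, ∀ j, Function.update x i t j ∈ I := by
    intro t ht j
    rcases eq_or_ne j i with rfl | hj
    · simpa using ht
    · rw [Function.update_of_ne hj]; exact hx j
  have key : ∀ (p : ℕ) (k : κ) (t : ℝ),
      pderiv n (f k) i p (Function.update x i t)
        = iteratedDeriv p (fun s => f k (Function.update x i s)) t := by
    intro p k t
    unfold pderiv
    simp [Function.update_idem]
  have hcore := core hIopen (fun k t => f k (Function.update x i t))
    (fun k => hf k i x hx) hα hM1 hM2 hM3
    (fun k t ht => by
      have := hb1 k i (Function.update x i t) (hxmem t ht)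
      rwa [key 1 k t, iteratedDeriv_one] at this)
    (fun k t ht => by
      have := hb2 k i (Function.update x i t) (hxmem t ht)
      rwa [key 2 k t, iteratedDeriv_succ, iteratedDeriv_one] at this)
    (fun k t ht => by
      have := hb3 k i (Function.update x i t) (hxmem t ht)
      rwa [key 3 k t, iteratedDeriv_succ, iteratedDeriv_succ, iteratedDeriv_one] at this)
    (fun t => F (Function.update x i t))
    (fun t => hF _)
    (x i) (hx i)
  exact hcore

lemma three_halves_bound {α : ℝ} (hα : 1 ≤ α) : (1 + 2*α) ^ ((3:ℝ)/2) ≤ 13 * α ^ 2 := by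
  have hα0 : (0:ℝ) < α := lt_of_lt_of_le one_pos hα
  have h1 : (1 + 2*α) ^ ((3:ℝ)/2) ≤ (3*α) ^ ((3:ℝ)/2) :=
    Real.rpow_le_rpow (by linarith) (by linarith) (by norm_num)
  have h2 : (3*α : ℝ) ^ ((3:ℝ)/2) = 3 ^ ((3:ℝ)/2) * α ^ ((3:ℝ)/2) :=
    Real.mul_rpow (by norm_num) hα0.le
  have h3 : α ^ ((3:ℝ)/2) ≤ α ^ ((2:ℕ):ℝ) :=
    Real.rpow_le_rpow_of_exponent_le hα (by norm_num)
  have h4 : α ^ ((2:ℕ):ℝ) = α ^ (2:ℕ) := Real.rpow_natCast α 2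
  have h5 : (3:ℝ) ^ ((3:ℝ)/2) ≤ 13 := by
    have hb0 : (0:ℝ) ≤ (3:ℝ) ^ ((3:ℝ)/2) := Real.rpow_nonneg (by norm_num) _
    have hsq : ((3:ℝ) ^ ((3:ℝ)/2)) ^ (2:ℕ) = 27 := by
      rw [← Real.rpow_natCast ((3:ℝ) ^ ((3:ℝ)/2)) 2, ← Real.rpow_mul (by norm_num : (0:ℝ) ≤ 3)]
      norm_num
    nlinarith [hsq, hb0]
  calc (1 + 2*α) ^ ((3:ℝ)/2) ≤ 3 ^ ((3:ℝ)/2) * α ^ ((3:ℝ)/2) := by rw [← h2]; exact h1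
    _ ≤ 3 ^ ((3:ℝ)/2) * α ^ (2:ℕ) := by
        rw [← h4]
        exact mul_le_mul_of_nonneg_left h3 (Real.rpow_nonneg (by norm_num) _)
    _ ≤ 13 * α ^ 2 := mul_le_mul_of_nonneg_right h5 (by positivity)

theorem stmt2
    {n : ℕ} {I : Set ℝ} (hIopen : IsOpen I) (hIconn : I.OrdConnected)
    (hI0 : (0 : ℝ) ∈ I)
    {κ : Type} [Fintype κ] [Nonempty κ]
    (f : κ → (Fin n → ℝ) → ℝ) (hf : ∀ k, CoordDiff3 n I (f k))
    (hbdd1 : BddAbove (lamFamSet n I f 1))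
    (hbdd2 : BddAbove (lamFamSet n I f 2))
    (hbdd3 : BddAbove (lamFamSet n I f 3))
    (α : ℝ) (hα : 1 ≤ α)
    (F : (Fin n → ℝ) → ℝ)
    (hF : ∀ x, F x = α⁻¹ * Real.log (∑ k, Real.exp (α * f k x))) :
    lam n I F 2 ≤ 3 * α * lamFam n I f 2 ∧
      lam n I F 3 ≤ 13 * α ^ 2 * lamFam n I f 3 := by
  have hα0 : 0 < α := lt_of_lt_of_le one_pos hα
  have hpd : ∀ (r : ℕ), BddAbove (lamFamSet n I f r) →
      ∀ (k : κ) (i : Fin n) (p : ℕ) (x : Fin n → ℝ),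
      1 ≤ p → p ≤ r → (∀ j, x j ∈ I) →
      |pderiv n (f k) i p x| ≤ (lamFam n I f r) ^ ((p:ℝ)/(r:ℝ)) := by
    intro r hbdd k i p x hp hpr hx
    have hmem : |pderiv n (f k) i p x| ^ ((r:ℝ)/(p:ℝ)) ∈ lamFamSet n I f r :=
      Set.mem_iUnion.2 ⟨k, ⟨i, p, x, hp, hpr, hx, rfl⟩⟩
    exact rpow_trick (abs_nonneg _) hp hpr (le_csSup hbdd hmem)
  have hLnn : ∀ r : ℕ, 0 ≤ lamFam n I f r := by
    intro r
    refine Real.sSup_nonneg ?_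
    rintro y hy
    rcases Set.mem_iUnion.1 hy with ⟨k, i, p, x, h1, h2, h3, rfl⟩
    positivity
  set L2 := lamFam n I f 2 with hL2def
  set L3 := lamFam n I f 3 with hL3def
  have hL2 : 0 ≤ L2 := hLnn 2
  have hL3 : 0 ≤ L3 := hLnn 3
  constructor
  · -- r = 2 case
    have hB := boundF hIopen f hf hα0 F hF
      (Real.rpow_nonneg hL2 ((1:ℝ)/2)) hL2 hL3
      (fun k i x hx => by
        have := hpd 2 hbdd2 k i 1 x (le_refl 1) (by norm_num) hx
        convert this using 2 <;> norm_num)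
      (fun k i x hx => by
        have := hpd 2 hbdd2 k i 2 x (by norm_num) (le_refl 2) hx
        convert this using 1 <;> norm_num [hL2def])
      (fun k i x hx => by
        have := hpd 3 hbdd3 k i 3 x (by norm_num) (le_refl 3) hx
        convert this using 1 <;> norm_num [hL3def])
    refine Real.sSup_le ?_ (by positivity)
    rintro y ⟨i, p, x, hp1, hp2, hx, rfl⟩
    obtain ⟨b1, b2, b3⟩ := hB i x hx
    have hsq : (L2 ^ ((1:ℝ)/2)) ^ (2:ℕ) = L2 := by
      rw [← Real.rpow_natCast (L2 ^ ((1:ℝ)/2)) 2, ← Real.rpow_mul hL2]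
      norm_num
    interval_cases p
    · -- p = 1 : y = |..|^2
      have : |pderiv n F i 1 x| ^ (((2:ℕ):ℝ)/((1:ℕ):ℝ)) ≤ (L2 ^ ((1:ℝ)/2)) ^ (((2:ℕ):ℝ)/((1:ℕ):ℝ)) :=
        Real.rpow_le_rpow (abs_nonneg _) b1 (by norm_num)
      refine le_trans this ?_
      rw [show (((2:ℕ):ℝ)/((1:ℕ):ℝ)) = ((2:ℕ):ℝ) by norm_num, Real.rpow_natCast, hsq]
      nlinarith [mul_nonneg hL2 (by nlinarith : (0:ℝ) ≤ 3*α - 1)]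
    · -- p = 2 : y = |..|^1
      rw [show (((2:ℕ):ℝ)/((2:ℕ):ℝ)) = 1 by norm_num, Real.rpow_one]
      rw [hsq] at b2
      nlinarith [b2, mul_nonneg hL2 (by nlinarith : (0:ℝ) ≤ α - 1), abs_nonneg (pderiv n F i 2 x)]
  · -- r = 3 case
    have hB := boundF hIopen f hf hα0 F hF
      (Real.rpow_nonneg hL3 ((1:ℝ)/3)) (Real.rpow_nonneg hL3 ((2:ℝ)/3)) hL3
      (fun k i x hx => by
        have := hpd 3 hbdd3 k i 1 x (le_refl 1) (by norm_num) hx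
        convert this using 2 <;> norm_num)
      (fun k i x hx => by
        have := hpd 3 hbdd3 k i 2 x (by norm_num) (by norm_num) hx
        convert this using 2 <;> norm_num)
      (fun k i x hx => by
        have := hpd 3 hbdd3 k i 3 x (by norm_num) (le_refl 3) hx
        convert this using 1 <;> norm_num [hL3def])
    refine Real.sSup_le ?_ (by positivity)
    rintro y ⟨i, p, x, hp1, hp2, hx, rfl⟩
    obtain ⟨b1, b2, b3⟩ := hB i x hx
    have hcube : (L3 ^ ((1:ℝ)/3)) ^ (3:ℕ) = L3 := by
      rw [← Real.rpow_natCast (L3 ^ ((1:ℝ)/3)) 3, ← Real.rpow_mul hL3]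
      norm_num
    have hsq13 : (L3 ^ ((1:ℝ)/3)) ^ (2:ℕ) = L3 ^ ((2:ℝ)/3) := by
      rw [← Real.rpow_natCast (L3 ^ ((1:ℝ)/3)) 2, ← Real.rpow_mul hL3]
      norm_num
    have hmul : L3 ^ ((1:ℝ)/3) * L3 ^ ((2:ℝ)/3) = L3 := by
      rw [← Real.rpow_add' hL3 (by norm_num)]
      norm_num
    interval_cases p
    · -- p = 1 : y = |..|^3
      have : |pderiv n F i 1 x| ^ (((3:ℕ):ℝ)/((1:ℕ):ℝ)) ≤ (L3 ^ ((1:ℝ)/3)) ^ (((3:ℕ):ℝ)/((1:ℕ):ℝ)) :=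
        Real.rpow_le_rpow (abs_nonneg _) b1 (by norm_num)
      refine le_trans this ?_
      rw [show (((3:ℕ):ℝ)/((1:ℕ):ℝ)) = ((3:ℕ):ℝ) by norm_num, Real.rpow_natCast, hcube]
      nlinarith [mul_nonneg hL3 (by nlinarith : (0:ℝ) ≤ 13*α^2 - 1)]
    · -- p = 2 : y = |..|^{3/2}
      rw [hsq13] at b2
      have hb2' : |pderiv n F i 2 x| ≤ (1 + 2*α) * L3 ^ ((2:ℝ)/3) := by
        calc |pderiv n F i 2 x| ≤ L3 ^ ((2:ℝ)/3) + 2 * α * L3 ^ ((2:ℝ)/3) := b2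
          _ = (1 + 2*α) * L3 ^ ((2:ℝ)/3) := by ring
      have hstep : |pderiv n F i 2 x| ^ (((3:ℕ):ℝ)/((2:ℕ):ℝ))
          ≤ ((1 + 2*α) * L3 ^ ((2:ℝ)/3)) ^ (((3:ℕ):ℝ)/((2:ℕ):ℝ)) :=
        Real.rpow_le_rpow (abs_nonneg _) hb2' (by norm_num)
      refine le_trans hstep ?_
      rw [show (((3:ℕ):ℝ)/((2:ℕ):ℝ)) = (3:ℝ)/2 by norm_num]
      rw [Real.mul_rpow (by linarith) (Real.rpow_nonneg hL3 _)]
      rw [← Real.rpow_mul hL3]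
      norm_num
      calc (1 + 2*α) ^ ((3:ℝ)/2) * L3 ≤ (13 * α^2) * L3 :=
            mul_le_mul_of_nonneg_right (three_halves_bound hα) hL3
        _ = 13 * α^2 * L3 := by ring
    · -- p = 3 : y = |..|^1
      rw [show (((3:ℕ):ℝ)/((3:ℕ):ℝ)) = 1 by norm_num, Real.rpow_one]
      rw [hcube] at b3
      rw [show 6 * α * L3 ^ ((1:ℝ)/3) * L3 ^ ((2:ℝ)/3) = 6 * α * L3 by rw [mul_assoc, hmul]] at b3
      nlinarith [b3, mul_nonneg hL3 (by nlinarith : (0:ℝ) ≤ 7*α^2 - 6*α - 1)]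
end

section
/- Let X₁,…,Xₙ be i.i.d. real random variables and Y₁,…,Yₙ be i.i.d. real random variables, with the two families independent of each other, E[X₁] = E[Y₁] = 0, E[X₁²] = E[Y₁²] = 1, E|X₁|³ < ∞ and E|Y₁|³ < ∞. Then for every thrice differentiable g : ℝ → ℝ with bounded first three derivatives, |E g(n^{-1/2} Σᵢ₌₁ⁿ Xᵢ) − E g(n^{-1/2} Σᵢ₌₁ⁿ Yᵢ)| ≤ C₂(g) (E|X₁|³ + E|Y₁|³) / √n. -/
open MeasureTheory ProbabilityTheory

lemma key_aux (h : ℝ → ℝ) (hd : Differentiable ℝ h) (h0 : h 0 = 0) {c : ℝ} {k : ℕ}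
    (hb : ∀ s, |deriv h s| ≤ c * |s| ^ k) {t : ℝ} (ht : 0 ≤ t) :
    |h t| ≤ c * t ^ (k + 1) / (k + 1) := by
  have hc : 0 ≤ c := by
    have := hb 1
    simp only [abs_one, one_pow, mul_one] at this
    exact le_trans (abs_nonneg _) this
  have hp : ∀ x : ℝ, HasDerivAt (fun s : ℝ => c * s ^ (k+1) / (k+1)) (c * x ^ k) x := by
    intro x
    have h := ((hasDerivAt_pow (k+1) x).const_mul c).div_const ((k+1 : ℕ) : ℝ)
    convert h using 1
    · rfl
    · rfl
    · norm_num
    · have hk : ((k:ℝ) + 1) ≠ 0 := by positivity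
      push_cast
      field_simp
  have hint : interior (Set.Ici (0:ℝ)) = Set.Ioi 0 := interior_Ici
  have hup : MonotoneOn (fun s => c * s ^ (k+1) / (k+1) - h s) (Set.Ici 0) := by
    apply monotoneOn_of_deriv_nonneg (convex_Ici 0)
    · exact (Continuous.sub (by continuity) hd.continuous).continuousOn
    · intro x _; exact ((hp x).sub (hd x).hasDerivAt).differentiableAt.differentiableWithinAt
    · intro x hx
      rw [hint] at hx
      rw [HasDerivAt.deriv (f := fun s => c * s ^ (k+1) / (k+1) - h s) ((hp x).sub (hd x).hasDerivAt), sub_nonneg]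
      calc deriv h x ≤ |deriv h x| := le_abs_self _
        _ ≤ c * |x|^k := hb x
        _ = c * x ^ k := by rw [abs_of_pos hx]
  have hdown : MonotoneOn (fun s => c * s ^ (k+1) / (k+1) + h s) (Set.Ici 0) := by
    apply monotoneOn_of_deriv_nonneg (convex_Ici 0)
    · exact (Continuous.add (by continuity) hd.continuous).continuousOn
    · intro x _; exact ((hp x).add (hd x).hasDerivAt).differentiableAt.differentiableWithinAt
    · intro x hx
      rw [hint] at hx
      rw [HasDerivAt.deriv (f := fun s => c * s ^ (k+1) / (k+1) + h s) ((hp x).add (hd x).hasDerivAt)]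
      have h1 := (abs_le.mp (hb x)).1
      rw [abs_of_pos hx] at h1
      linarith
  have h1 := hup (Set.self_mem_Ici) (ht : t ∈ Set.Ici 0) ht
  have h2 := hdown (Set.self_mem_Ici) (ht : t ∈ Set.Ici 0) ht
  simp only [h0, ne_eq, zero_pow, mul_zero, zero_div, sub_zero, add_zero, Nat.succ_ne_zero,
    not_false_iff, zero_add] at h1 h2
  rw [abs_le]
  constructor <;> nlinarith

lemma key (h : ℝ → ℝ) (hd : Differentiable ℝ h) (h0 : h 0 = 0) {c : ℝ} {k : ℕ}
    (hb : ∀ s, |deriv h s| ≤ c * |s| ^ k) (t : ℝ) :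
    |h t| ≤ c * |t| ^ (k + 1) / (k + 1) := by
  rcases le_or_gt 0 t with ht | ht
  · rw [abs_of_nonneg ht]; exact key_aux h hd h0 hb ht
  · have hd' : Differentiable ℝ (fun s => h (-s)) := hd.comp differentiable_neg
    have h0' : (fun s => h (-s)) 0 = 0 := by simpa using h0
    have hb' : ∀ s, |deriv (fun s => h (-s)) s| ≤ c * |s| ^ k := by
      intro s
      rw [deriv_comp_neg, abs_neg]
      simpa using hb (-s)
    have := key_aux _ hd' h0' hb' (t := -t) (by linarith)
    simp only [neg_neg] at this
    rwa [abs_of_neg ht]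

/-- Third order Taylor bound. -/
lemma taylor3 (g : ℝ → ℝ) (hg : ∀ p < 3, Differentiable ℝ (iteratedDeriv p g)) {B3 : ℝ}
    (hB3 : ∀ t, |iteratedDeriv 3 g t| ≤ B3) (a t : ℝ) :
    |g (a + t) - g a - deriv g a * t - iteratedDeriv 2 g a * (t ^ 2 / 2)| ≤
      B3 * |t| ^ 3 / 6 := by
  have hg0 : Differentiable ℝ g := by simpa [iteratedDeriv_zero] using hg 0 (by norm_num)
  have hg1 : Differentiable ℝ (deriv g) := by simpa [iteratedDeriv_one] using hg 1 (by norm_num)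
  have hg2 : Differentiable ℝ (iteratedDeriv 2 g) := hg 2 (by norm_num)
  have hd21 : deriv (deriv g) = iteratedDeriv 2 g := by
    rw [← iteratedDeriv_one (f := g)]; exact (iteratedDeriv_succ).symm
  have hd32 : deriv (iteratedDeriv 2 g) = iteratedDeriv 3 g := (iteratedDeriv_succ).symm
  -- step A
  have stepA : ∀ s : ℝ, |iteratedDeriv 2 g (a + s) - iteratedDeriv 2 g a| ≤ B3 * |s| ^ 1 := by
    intro s
    have hder : ∀ x : ℝ, HasDerivAt (fun s => iteratedDeriv 2 g (a + s) - iteratedDeriv 2 g a)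
        (iteratedDeriv 3 g (a + x)) x := by
      intro x
      have := ((hg2 (a + x)).hasDerivAt).comp_const_add a x
      rw [hd32] at this
      simpa using this.sub_const (iteratedDeriv 2 g a)
    have := key (fun s => iteratedDeriv 2 g (a + s) - iteratedDeriv 2 g a)
      (fun x => ((hder x).differentiableAt)) (by simp) (c := B3) (k := 0)
      (fun s => by rw [(hder s).deriv]; simpa using hB3 (a + s)) s
    simpa using this
  -- step B
  have stepB : ∀ s : ℝ, |deriv g (a + s) - deriv g a - iteratedDeriv 2 g a * s|
      ≤ (B3 / 2) * |s| ^ 2 := by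
    intro s
    have hder : ∀ x : ℝ, HasDerivAt (fun s => deriv g (a + s) - deriv g a - iteratedDeriv 2 g a * s)
        (iteratedDeriv 2 g (a + x) - iteratedDeriv 2 g a) x := by
      intro x
      have h1 := ((hg1 (a + x)).hasDerivAt).comp_const_add a x
      rw [hd21] at h1
      have h2 : HasDerivAt (fun s : ℝ => iteratedDeriv 2 g a * s) (iteratedDeriv 2 g a) x := by
        simpa using (hasDerivAt_id x).const_mul (iteratedDeriv 2 g a)
      exact (h1.sub_const (deriv g a)).sub h2
    have := key (fun s => deriv g (a + s) - deriv g a - iteratedDeriv 2 g a * s)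
      (fun x => (hder x).differentiableAt) (by simp) (c := B3) (k := 1)
      (fun s => by rw [(hder s).deriv]; simpa using stepA s) s
    have e : B3 * |s| ^ (1 + 1) / ((1:ℕ) + 1 : ℝ) = (B3 / 2) * |s| ^ 2 := by norm_num; ring
    rw [e] at this
    exact this
  -- step C
  have hder : ∀ x : ℝ, HasDerivAt (fun s => g (a + s) - g a - deriv g a * s
      - iteratedDeriv 2 g a * (s ^ 2 / 2))
      (deriv g (a + x) - deriv g a - iteratedDeriv 2 g a * x) x := by
    intro x
    have h1 := ((hg0 (a + x)).hasDerivAt).comp_const_add a x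
    have h2 : HasDerivAt (fun s : ℝ => deriv g a * s) (deriv g a) x := by
      simpa using (hasDerivAt_id x).const_mul (deriv g a)
    have h3 : HasDerivAt (fun s : ℝ => iteratedDeriv 2 g a * (s ^ 2 / 2))
        (iteratedDeriv 2 g a * x) x := by
      have := ((hasDerivAt_pow 2 x).div_const 2).const_mul (iteratedDeriv 2 g a)
      convert this using 1
      · rfl
      · rfl
      · push_cast
        ring
    exact ((h1.sub_const (g a)).sub h2).sub h3
  have final := key (fun s => g (a + s) - g a - deriv g a * s
      - iteratedDeriv 2 g a * (s ^ 2 / 2)) (fun x => (hder x).differentiableAt)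
      (by simp) (c := B3 / 2) (k := 2)
    (fun s => by rw [(hder s).deriv]; simpa using stepB s) t
  have e : B3 / 2 * |t| ^ (2 + 1) / ((2:ℕ) + 1 : ℝ) = B3 * |t| ^ 3 / 6 := by norm_num; ring
  rw [e] at final
  exact final

lemma swap_step {Ω : Type} [MeasurableSpace Ω] {μ : Measure Ω} [IsProbabilityMeasure μ]
    (g : ℝ → ℝ) (hg : ∀ p < 3, Differentiable ℝ (iteratedDeriv p g))
    {B1 B2 B3 : ℝ} (hB1 : ∀ t, |deriv g t| ≤ B1) (hB2 : ∀ t, |iteratedDeriv 2 g t| ≤ B2)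
    (hB3 : ∀ t, |iteratedDeriv 3 g t| ≤ B3)
    (c : ℝ) (W ζ : Ω → ℝ) (hWm : Measurable W) (hζm : Measurable ζ)
    (hWint : Integrable W μ) (hζ3 : MemLp ζ 3 μ)
    (hind : IndepFun W ζ μ)
    (hmean : ∫ ω, ζ ω ∂μ = 0) (hvar : ∫ ω, ζ ω ^ 2 ∂μ = 1) :
    |(∫ ω, g (c * (W ω + ζ ω)) ∂μ) - (∫ ω, g (c * W ω) ∂μ)
      - c ^ 2 / 2 * ∫ ω, iteratedDeriv 2 g (c * W ω) ∂μ|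
      ≤ B3 * |c| ^ 3 / 6 * ∫ ω, |ζ ω| ^ 3 ∂μ := by
  have hg0 : Differentiable ℝ g := by simpa [iteratedDeriv_zero] using hg 0 (by norm_num)
  have hg1 : Differentiable ℝ (deriv g) := by simpa [iteratedDeriv_one] using hg 1 (by norm_num)
  have hg2 : Differentiable ℝ (iteratedDeriv 2 g) := hg 2 (by norm_num)
  have hB1' : 0 ≤ B1 := le_trans (abs_nonneg _) (hB1 0)
  have mW : Measurable (fun ω => c * W ω) := hWm.const_mul c
  have mζ : Measurable (fun ω => c * ζ ω) := hζm.const_mul c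
  -- integrability of ζ powers
  have intζ : Integrable ζ μ :=
    memLp_one_iff_integrable.mp (hζ3.mono_exponent (by norm_num))
  have intζ2 : Integrable (fun ω => ζ ω ^ 2) μ :=
    (hζ3.mono_exponent (by norm_num)).integrable_sq
  have intζ3 : Integrable (fun ω => |ζ ω| ^ 3) μ := by
    have h := hζ3.integrable_norm_rpow (by norm_num) (by norm_num)
    refine h.congr (Filter.Eventually.of_forall fun ω => ?_)
    show ‖ζ ω‖ ^ ENNReal.toReal 3 = |ζ ω| ^ 3
    rw [Real.norm_eq_abs, ← Real.rpow_natCast]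
    norm_num
  -- Lipschitz bound for g
  have hLip : ∀ x : ℝ, |g x| ≤ |g 0| + B1 * |x| := by
    intro x
    have h := Convex.norm_image_sub_le_of_norm_deriv_le (f := g) (s := Set.univ)
      (fun y _ => hg0 y) (fun y _ => by simpa using hB1 y)
      convex_univ (Set.mem_univ 0) (Set.mem_univ x)
    simp only [Real.norm_eq_abs, sub_zero] at h
    calc |g x| ≤ |g 0| + |g x - g 0| := by
          have := abs_sub_abs_le_abs_sub (g x) (g 0); linarith
      _ ≤ |g 0| + B1 * |x| := by linarith
  -- integrability of the four pieces
  have asmA : AEStronglyMeasurable (fun ω => g (c * W ω)) μ :=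
    (hg0.continuous.measurable.comp mW).aestronglyMeasurable
  have intA : Integrable (fun ω => g (c * W ω)) μ := by
    refine Integrable.mono' ((integrable_const (|g 0|)).add ((hWint.abs).const_mul (B1 * |c|)))
      asmA (Filter.Eventually.of_forall fun ω => ?_)
    calc ‖g (c * W ω)‖ = |g (c * W ω)| := rfl
      _ ≤ |g 0| + B1 * |c * W ω| := hLip _
      _ = |g 0| + B1 * |c| * |W ω| := by rw [abs_mul]; ring
  have asmD : AEStronglyMeasurable (fun ω => deriv g (c * W ω)) μ :=
    (hg1.continuous.measurable.comp mW).aestronglyMeasurable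
  have intgW : Integrable (fun ω => deriv g (c * W ω)) μ :=
    Integrable.mono' (integrable_const B1) asmD (Filter.Eventually.of_forall fun ω => hB1 _)
  have asmE : AEStronglyMeasurable (fun ω => iteratedDeriv 2 g (c * W ω)) μ :=
    (hg2.continuous.measurable.comp mW).aestronglyMeasurable
  have intg2W : Integrable (fun ω => iteratedDeriv 2 g (c * W ω)) μ :=
    Integrable.mono' (integrable_const B2) asmE (Filter.Eventually.of_forall fun ω => hB2 _)
  have intD : Integrable (fun ω => deriv g (c * W ω) * ζ ω) μ :=
    intζ.bdd_mul asmD (Filter.Eventually.of_forall fun ω => hB1 _)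
  have intE : Integrable (fun ω => iteratedDeriv 2 g (c * W ω) * ζ ω ^ 2) μ :=
    intζ2.bdd_mul asmE (Filter.Eventually.of_forall fun ω => hB2 _)
  -- the remainder
  set r : Ω → ℝ := fun ω => g (c * W ω + c * ζ ω) - g (c * W ω)
    - deriv g (c * W ω) * (c * ζ ω) - iteratedDeriv 2 g (c * W ω) * ((c * ζ ω) ^ 2 / 2)
    with hr_def
  have hrbound : ∀ ω, ‖r ω‖ ≤ B3 * |c| ^ 3 / 6 * |ζ ω| ^ 3 := by
    intro ω
    have h := taylor3 g hg hB3 (c * W ω) (c * ζ ω)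
    calc ‖r ω‖ = |r ω| := rfl
      _ ≤ B3 * |c * ζ ω| ^ 3 / 6 := h
      _ = B3 * |c| ^ 3 / 6 * |ζ ω| ^ 3 := by rw [abs_mul, mul_pow]; ring
  have asmr : AEStronglyMeasurable r μ := by
    apply Measurable.aestronglyMeasurable
    apply Measurable.sub
    apply Measurable.sub
    apply Measurable.sub
    · exact hg0.continuous.measurable.comp (mW.add mζ)
    · exact hg0.continuous.measurable.comp mW
    · exact (hg1.continuous.measurable.comp mW).mul mζ
    · exact (hg2.continuous.measurable.comp mW).mul ((mζ.pow_const 2).div_const 2)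
  have intr : Integrable r μ :=
    Integrable.mono' (intζ3.const_mul (B3 * |c| ^ 3 / 6)) asmr
      (Filter.Eventually.of_forall hrbound)
  -- pointwise identity
  have hident : ∀ ω, g (c * (W ω + ζ ω)) = g (c * W ω) + deriv g (c * W ω) * (c * ζ ω)
      + iteratedDeriv 2 g (c * W ω) * ((c * ζ ω) ^ 2 / 2) + r ω := by
    intro ω
    rw [hr_def]
    simp only [mul_add]
    ring
  -- independence consequences
  have hindD : IndepFun (fun ω => deriv g (c * W ω)) ζ μ := by
    have := hind.comp (φ := fun x => deriv g (c * x)) (ψ := id)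
      (hg1.continuous.measurable.comp (measurable_id.const_mul c)) measurable_id
    exact this
  have hindE : IndepFun (fun ω => iteratedDeriv 2 g (c * W ω)) (fun ω => ζ ω ^ 2) μ := by
    have := hind.comp (φ := fun x => iteratedDeriv 2 g (c * x)) (ψ := fun x => x ^ 2)
      (hg2.continuous.measurable.comp (measurable_id.const_mul c)) (measurable_id.pow_const 2)
    exact this
  have hD0 : ∫ ω, deriv g (c * W ω) * ζ ω ∂μ = 0 := by
    have h := hindD.integral_mul_eq_mul_integral intgW.aestronglyMeasurable intζ.aestronglyMeasurable
    have : ∫ ω, deriv g (c * W ω) * ζ ω ∂μ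
        = (∫ ω, deriv g (c * W ω) ∂μ) * ∫ ω, ζ ω ∂μ := h
    rw [this, hmean, mul_zero]
  have hE1 : ∫ ω, iteratedDeriv 2 g (c * W ω) * ζ ω ^ 2 ∂μ
      = ∫ ω, iteratedDeriv 2 g (c * W ω) ∂μ := by
    have h := hindE.integral_mul_eq_mul_integral intg2W.aestronglyMeasurable intζ2.aestronglyMeasurable
    have h2 : ∫ ω, iteratedDeriv 2 g (c * W ω) * ζ ω ^ 2 ∂μ
        = (∫ ω, iteratedDeriv 2 g (c * W ω) ∂μ) * ∫ ω, ζ ω ^ 2 ∂μ := h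
    rw [h2, hvar, mul_one]
  -- split the integral
  have hsplit : ∫ ω, g (c * (W ω + ζ ω)) ∂μ
      = (∫ ω, g (c * W ω) ∂μ) + c * ∫ ω, deriv g (c * W ω) * ζ ω ∂μ
        + c ^ 2 / 2 * ∫ ω, iteratedDeriv 2 g (c * W ω) * ζ ω ^ 2 ∂μ + ∫ ω, r ω ∂μ := by
    have e1 : ∀ ω, deriv g (c * W ω) * (c * ζ ω) = c * (deriv g (c * W ω) * ζ ω) := by
      intro ω; ring
    have e2 : ∀ ω, iteratedDeriv 2 g (c * W ω) * ((c * ζ ω) ^ 2 / 2)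
        = c ^ 2 / 2 * (iteratedDeriv 2 g (c * W ω) * ζ ω ^ 2) := by
      intro ω; ring
    calc ∫ ω, g (c * (W ω + ζ ω)) ∂μ
        = ∫ ω, (g (c * W ω) + c * (deriv g (c * W ω) * ζ ω)
            + c ^ 2 / 2 * (iteratedDeriv 2 g (c * W ω) * ζ ω ^ 2) + r ω) ∂μ := by
          refine integral_congr_ae (Filter.Eventually.of_forall fun ω => ?_)
          show g (c * (W ω + ζ ω)) = _
          rw [hident ω, e1 ω, e2 ω]
      _ = (∫ ω, g (c * W ω) ∂μ) + c * ∫ ω, deriv g (c * W ω) * ζ ω ∂μ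
            + c ^ 2 / 2 * ∫ ω, iteratedDeriv 2 g (c * W ω) * ζ ω ^ 2 ∂μ + ∫ ω, r ω ∂μ := by
          have i1 : Integrable (fun ω => g (c * W ω) + c * (deriv g (c * W ω) * ζ ω)) μ :=
            intA.add (intD.const_mul c)
          have i2 : Integrable (fun ω => g (c * W ω) + c * (deriv g (c * W ω) * ζ ω)
              + c ^ 2 / 2 * (iteratedDeriv 2 g (c * W ω) * ζ ω ^ 2)) μ :=
            i1.add (intE.const_mul (c ^ 2 / 2))
          rw [integral_add i2 intr, integral_add i1 (intE.const_mul (c ^ 2 / 2)),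
            integral_add intA (intD.const_mul c), integral_const_mul, integral_const_mul]
  have hfinal : (∫ ω, g (c * (W ω + ζ ω)) ∂μ) - (∫ ω, g (c * W ω) ∂μ)
      - c ^ 2 / 2 * ∫ ω, iteratedDeriv 2 g (c * W ω) ∂μ = ∫ ω, r ω ∂μ := by
    rw [hsplit, hD0, hE1]; ring
  rw [hfinal]
  calc |∫ ω, r ω ∂μ| ≤ ∫ ω, |r ω| ∂μ := by
        simpa [Real.norm_eq_abs] using norm_integral_le_integral_norm (f := r) (μ := μ)
    _ ≤ ∫ ω, B3 * |c| ^ 3 / 6 * |ζ ω| ^ 3 ∂μ := by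
        refine integral_mono intr.abs (intζ3.const_mul _) fun ω => hrbound ω
    _ = B3 * |c| ^ 3 / 6 * ∫ ω, |ζ ω| ^ 3 ∂μ := integral_const_mul _ _

theorem stmt5
    {Ω : Type} [MeasurableSpace Ω] {μ : Measure Ω} [IsProbabilityMeasure μ]
    {n : ℕ} (hn : 0 < n)
    (X Y : Fin n → Ω → ℝ)
    (hXmeas : ∀ i, Measurable (X i)) (hYmeas : ∀ i, Measurable (Y i))
    (hXid : ∀ i, IdentDistrib (X i) (X ⟨0, hn⟩) μ μ)
    (hYid : ∀ i, IdentDistrib (Y i) (Y ⟨0, hn⟩) μ μ)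
    (hindep : iIndepFun (Sum.elim X Y) μ)
    (hX3 : MemLp (X ⟨0, hn⟩) 3 μ) (hY3 : MemLp (Y ⟨0, hn⟩) 3 μ)
    (hXmean : ∫ ω, X ⟨0, hn⟩ ω ∂μ = 0) (hYmean : ∫ ω, Y ⟨0, hn⟩ ω ∂μ = 0)
    (hXvar : ∫ ω, (X ⟨0, hn⟩ ω) ^ 2 ∂μ = 1)
    (hYvar : ∫ ω, (Y ⟨0, hn⟩ ω) ^ 2 ∂μ = 1)
    (g : ℝ → ℝ) (hg : ∀ p < 3, Differentiable ℝ (iteratedDeriv p g))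
    (B1 B2 B3 : ℝ)
    (hB1 : ∀ t, |deriv g t| ≤ B1)
    (hB2 : ∀ t, |iteratedDeriv 2 g t| ≤ B2)
    (hB3 : ∀ t, |iteratedDeriv 3 g t| ≤ B3) :
    |(∫ ω, g ((Real.sqrt n)⁻¹ * ∑ i, X i ω) ∂μ) -
        ∫ ω, g ((Real.sqrt n)⁻¹ * ∑ i, Y i ω) ∂μ| ≤
      (B1 / 6 + B2 / 2 + B3 / 6) *
        ((∫ ω, |X ⟨0, hn⟩ ω| ^ 3 ∂μ) + ∫ ω, |Y ⟨0, hn⟩ ω| ^ 3 ∂μ) /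
        Real.sqrt n := by
  classical
  set c : ℝ := (Real.sqrt n)⁻¹ with hc_def
  have hsq : (0:ℝ) < Real.sqrt n := Real.sqrt_pos.mpr (by exact_mod_cast hn)
  have hc0 : 0 ≤ c := inv_nonneg.mpr hsq.le
  set X0 := X ⟨0, hn⟩ with hX0_def
  set Y0 := Y ⟨0, hn⟩ with hY0_def
  set mX := ∫ ω, |X0 ω| ^ 3 ∂μ with hmX_def
  set mY := ∫ ω, |Y0 ω| ^ 3 ∂μ with hmY_def
  have hmXnn : 0 ≤ mX := integral_nonneg fun ω => by positivity
  have hmYnn : 0 ≤ mY := integral_nonneg fun ω => by positivity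
  have hB1' : 0 ≤ B1 := le_trans (abs_nonneg _) (hB1 0)
  have hB2' : 0 ≤ B2 := le_trans (abs_nonneg _) (hB2 0)
  have hB3' : 0 ≤ B3 := le_trans (abs_nonneg _) (hB3 0)
  set Z : Fin n ⊕ Fin n → Ω → ℝ := Sum.elim X Y with hZ_def
  have hZm : ∀ u, Measurable (Z u) := fun u => by
    cases u with
    | inl i => exact hXmeas i
    | inr i => exact hYmeas i
  have habs3 : Measurable fun x : ℝ => |x| ^ 3 := (continuous_abs.pow 3).measurable
  -- moments for each index
  have hXL3 : ∀ i, MemLp (X i) 3 μ := fun i => (hXid i).memLp_iff.mpr hX3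
  have hYL3 : ∀ i, MemLp (Y i) 3 μ := fun i => (hYid i).memLp_iff.mpr hY3
  have hXm : ∀ i, ∫ ω, X i ω ∂μ = 0 := fun i => ((hXid i).integral_eq).trans hXmean
  have hYm : ∀ i, ∫ ω, Y i ω ∂μ = 0 := fun i => ((hYid i).integral_eq).trans hYmean
  have hXv : ∀ i, ∫ ω, X i ω ^ 2 ∂μ = 1 := fun i =>
    (((hXid i).comp (measurable_id.pow_const 2)).integral_eq).trans hXvar
  have hYv : ∀ i, ∫ ω, Y i ω ^ 2 ∂μ = 1 := fun i =>
    (((hYid i).comp (measurable_id.pow_const 2)).integral_eq).trans hYvar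
  have hX3m : ∀ i, ∫ ω, |X i ω| ^ 3 ∂μ = mX := fun i =>
    ((hXid i).comp habs3).integral_eq
  have hY3m : ∀ i, ∫ ω, |Y i ω| ^ 3 ∂μ = mY := fun i =>
    ((hYid i).comp habs3).integral_eq
  have hZint : ∀ u, Integrable (Z u) μ := fun u => by
    cases u with
    | inl i => exact memLp_one_iff_integrable.mp ((hXL3 i).mono_exponent (by norm_num))
    | inr i => exact memLp_one_iff_integrable.mp ((hYL3 i).mono_exponent (by norm_num))
  -- hybrid sums
  set S : ℕ → Ω → ℝ := fun k ω => ∑ i : Fin n, (if (i : ℕ) < k then X i ω else Y i ω)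
    with hS_def
  set F : ℕ → ℝ := fun k => ∫ ω, g (c * S k ω) ∂μ with hF_def
  have hSn : ∀ ω, S n ω = ∑ i, X i ω := fun ω =>
    Finset.sum_congr rfl fun i _ => if_pos i.isLt
  have hS0 : ∀ ω, S 0 ω = ∑ i, Y i ω := fun ω =>
    Finset.sum_congr rfl fun i _ => if_neg (Nat.not_lt_zero _)

  -- the per-step bound
  have key_k : ∀ k, k < n → |F (k + 1) - F k| ≤ B3 * c ^ 3 / 6 * (mX + mY) := by
    intro k hk
    set kk : Fin n := ⟨k, hk⟩ with hkk_def
    set e : Fin n → Fin n ⊕ Fin n := fun i => if (i : ℕ) < k then Sum.inl i else Sum.inr i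
      with he_def
    set T : Finset (Fin n ⊕ Fin n) := (Finset.univ.erase kk).image e with hT_def
    set W : Ω → ℝ := fun ω => ∑ u ∈ T, Z u ω with hW_def
    have hWeq : (∑ u ∈ T, Z u) = W := funext fun ω => Finset.sum_apply _ _ _
    have hWm : Measurable W := Finset.measurable_sum _ fun u _ => hZm u
    have hWint : Integrable W μ := integrable_finset_sum _ fun u _ => hZint u
    -- kk is not hit by e on the erased set
    have hinlT : Sum.inl kk ∉ T := by
      rw [hT_def]
      simp only [Finset.mem_image, not_exists, not_and]
      rintro i hi
      rw [he_def]
      simp only [Finset.mem_erase] at hi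
      by_cases h : (i : ℕ) < k
      · simp only [if_pos h]
        intro hcon
        apply hi.1
        exact Sum.inl_injective hcon
      · simp only [if_neg h]
        intro hcon
        exact Sum.inr_ne_inl hcon
    have hinrT : Sum.inr kk ∉ T := by
      rw [hT_def]
      simp only [Finset.mem_image, not_exists, not_and]
      rintro i hi
      rw [he_def]
      simp only [Finset.mem_erase] at hi
      by_cases h : (i : ℕ) < k
      · simp only [if_pos h]
        intro hcon
        exact Sum.inl_ne_inr hcon
      · simp only [if_neg h]
        intro hcon
        have : i = kk := Sum.inr_injective hcon
        exact hi.1 this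
    have hindX : IndepFun W (X kk) μ := by
      have h := hindep.indepFun_finsetSum_of_notMem hZm hinlT
      rwa [hWeq] at h
    have hindY : IndepFun W (Y kk) μ := by
      have h := hindep.indepFun_finsetSum_of_notMem hZm hinrT
      rwa [hWeq] at h
    -- decomposition of the hybrid sums
    have hinj : ∀ x ∈ Finset.univ.erase kk, ∀ y ∈ Finset.univ.erase kk, e x = e y → x = y := by
      intro x _ y _ hxy
      rw [he_def] at hxy
      by_cases h1 : (x : ℕ) < k <;> by_cases h2 : (y : ℕ) < k <;>
        simp only [if_pos, if_neg, h1, h2, if_true, if_false] at hxy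
      · exact Sum.inl_injective hxy
      · exact absurd hxy (by simp)
      · exact absurd hxy (by simp)
      · exact Sum.inr_injective hxy
    have hWsum : ∀ ω, W ω = ∑ i ∈ Finset.univ.erase kk, Z (e i) ω := by
      intro ω
      rw [hW_def]
      exact Finset.sum_image hinj
    have hSk1 : ∀ ω, S (k + 1) ω = W ω + X kk ω := by
      intro ω
      have hS : S (k + 1) ω = ∑ i : Fin n, (if (i : ℕ) < k + 1 then X i ω else Y i ω) := rfl
      have h1 : ∑ i : Fin n, (if (i : ℕ) < k + 1 then X i ω else Y i ω)
          = (if (kk : ℕ) < k + 1 then X kk ω else Y kk ω)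
            + ∑ i ∈ Finset.univ.erase kk, (if (i : ℕ) < k + 1 then X i ω else Y i ω) :=
        (Finset.add_sum_erase _ _ (Finset.mem_univ kk)).symm
      rw [hS, h1, if_pos (Nat.lt_succ_self k), hWsum ω, add_comm]
      congr 1
      refine Finset.sum_congr rfl fun i hi => ?_
      have hik : (i : ℕ) ≠ k := by
        intro hik
        exact (Finset.mem_erase.mp hi).1 (Fin.ext hik)
      by_cases h : (i : ℕ) < k
      · rw [if_pos (Nat.lt_succ_of_lt h)]
        simp only [he_def, hZ_def]
        rw [if_pos h]
        rfl
      · rw [if_neg (by omega : ¬ (i : ℕ) < k + 1)]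
        simp only [he_def, hZ_def]
        rw [if_neg h]
        rfl
    have hSk : ∀ ω, S k ω = W ω + Y kk ω := by
      intro ω
      have hS : S k ω = ∑ i : Fin n, (if (i : ℕ) < k then X i ω else Y i ω) := rfl
      have h1 : ∑ i : Fin n, (if (i : ℕ) < k then X i ω else Y i ω)
          = (if (kk : ℕ) < k then X kk ω else Y kk ω)
            + ∑ i ∈ Finset.univ.erase kk, (if (i : ℕ) < k then X i ω else Y i ω) :=
        (Finset.add_sum_erase _ _ (Finset.mem_univ kk)).symm
      rw [hS, h1, if_neg (lt_irrefl k), hWsum ω, add_comm]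
      congr 1
      refine Finset.sum_congr rfl fun i hi => ?_
      by_cases h : (i : ℕ) < k
      · rw [if_pos h]
        simp only [he_def, hZ_def]
        rw [if_pos h]
        rfl
      · rw [if_neg h]
        simp only [he_def, hZ_def]
        rw [if_neg h]
        rfl
    -- apply the swap step
    have hswX := swap_step g hg hB1 hB2 hB3 c W (X kk) hWm (hXmeas kk) hWint (hXL3 kk)
      hindX (hXm kk) (hXv kk)
    have hswY := swap_step g hg hB1 hB2 hB3 c W (Y kk) hWm (hYmeas kk) hWint (hYL3 kk)
      hindY (hYm kk) (hYv kk)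
    rw [hX3m kk] at hswX
    rw [hY3m kk] at hswY
    have hFk1 : F (k + 1) = ∫ ω, g (c * (W ω + X kk ω)) ∂μ := by
      have : F (k + 1) = ∫ ω, g (c * S (k + 1) ω) ∂μ := rfl
      rw [this]
      exact integral_congr_ae (Filter.Eventually.of_forall fun ω => by simp only [hSk1 ω])
    have hFk : F k = ∫ ω, g (c * (W ω + Y kk ω)) ∂μ := by
      have : F k = ∫ ω, g (c * S k ω) ∂μ := rfl
      rw [this]
      exact integral_congr_ae (Filter.Eventually.of_forall fun ω => by simp only [hSk ω])
    have habs : |c| = c := abs_of_nonneg hc0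
    rw [habs] at hswX hswY
    have hdiff : F (k + 1) - F k
        = ((∫ ω, g (c * (W ω + X kk ω)) ∂μ) - (∫ ω, g (c * W ω) ∂μ)
            - c ^ 2 / 2 * ∫ ω, iteratedDeriv 2 g (c * W ω) ∂μ)
          - ((∫ ω, g (c * (W ω + Y kk ω)) ∂μ) - (∫ ω, g (c * W ω) ∂μ)
            - c ^ 2 / 2 * ∫ ω, iteratedDeriv 2 g (c * W ω) ∂μ) := by
      rw [hFk1, hFk]; ring
    rw [hdiff]
    refine le_trans (abs_sub _ _) ?_
    calc _ ≤ B3 * c ^ 3 / 6 * mX + B3 * c ^ 3 / 6 * mY := add_le_add hswX hswY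
      _ = B3 * c ^ 3 / 6 * (mX + mY) := by ring
  -- telescoping
  have htel : F n - F 0 = ∑ k ∈ Finset.range n, (F (k + 1) - F k) :=
    (Finset.sum_range_sub F n).symm
  have hgoalL : (∫ ω, g (c * ∑ i, X i ω) ∂μ) = F n := by
    have : F n = ∫ ω, g (c * S n ω) ∂μ := rfl
    rw [this]
    exact integral_congr_ae (Filter.Eventually.of_forall fun ω => by simp only [hSn ω])
  have hgoalR : (∫ ω, g (c * ∑ i, Y i ω) ∂μ) = F 0 := by
    have : F 0 = ∫ ω, g (c * S 0 ω) ∂μ := rfl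
    rw [this]
    exact integral_congr_ae (Filter.Eventually.of_forall fun ω => by simp only [hS0 ω])
  rw [hgoalL, hgoalR]
  have hbound : |F n - F 0| ≤ n * (B3 * c ^ 3 / 6 * (mX + mY)) := by
    rw [htel]
    calc |∑ k ∈ Finset.range n, (F (k + 1) - F k)|
        ≤ ∑ k ∈ Finset.range n, |F (k + 1) - F k| := Finset.abs_sum_le_sum_abs _ _
      _ ≤ ∑ _k ∈ Finset.range n, (B3 * c ^ 3 / 6 * (mX + mY)) := by
          refine Finset.sum_le_sum fun k hkmem => key_k k (Finset.mem_range.mp hkmem)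
      _ = n * (B3 * c ^ 3 / 6 * (mX + mY)) := by
          rw [Finset.sum_const, Finset.card_range, nsmul_eq_mul]
  -- final arithmetic
  have hnc : (n : ℝ) * c ^ 3 = c := by
    have h1 : Real.sqrt n ^ 2 = (n : ℝ) := Real.sq_sqrt (by positivity)
    have hne : Real.sqrt n ≠ 0 := ne_of_gt hsq
    have hnne : (n : ℝ) ≠ 0 := Nat.cast_ne_zero.mpr hn.ne'
    rw [hc_def, inv_pow]
    rw [show (Real.sqrt n) ^ 3 = (n : ℝ) * Real.sqrt n by nlinarith [h1]]
    rw [mul_inv]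
    field_simp
  refine le_trans hbound ?_
  have h2 : (n : ℝ) * (B3 * c ^ 3 / 6 * (mX + mY)) = B3 / 6 * (mX + mY) * c := by
    linear_combination B3 / 6 * (mX + mY) * hnc
  rw [h2]
  have h3 : B3 / 6 * (mX + mY) * c ≤ (B1 / 6 + B2 / 2 + B3 / 6) * (mX + mY) * c := by
    have : B3 / 6 * (mX + mY) ≤ (B1 / 6 + B2 / 2 + B3 / 6) * (mX + mY) := by nlinarith
    exact mul_le_mul_of_nonneg_right this hc0
  refine le_trans h3 ?_
  apply le_of_eq
  rw [hc_def]
  ring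
end
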